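/- arXiv:2211.07096 — 4 statements merged into one kernel-verified Lean document; each statement's English description precedes it below -/
import Mathlib

section
/- Let A ∈ ℝ^{m_y × d_y} with Moore–Penrose inverse A⁺, let V₂ be a real d_y × k matrix whose columns form an orthonormal basis of ker(A), let c ∈ ℝ^{m_y}, let g : ℝ^{d_x} × ℝ^{d_y} → ℝ be twice continuously differentiable such that g(x,·) is μ_g-strongly convex for every x (μ_g > 0), and let h : ℝ^{d_x} → ℝ^{m_y} be differentiable. Assume that for every x the set 𝒴(x) = {y ∈ ℝ^{d_y} : A y + h(x) = c} is nonempty, and let y* : ℝ^{d_x} → ℝ^{d_y} satisfy, for every x, y*(x) ∈ 𝒴(x) and g(x, y*(x)) ≤ g(x, y) for all y ∈ 𝒴(x). If y* is differentiable at a point x, then the k × k matrix V₂ᵀ ∇_{yy} g(x, y*(x)) V₂ is invertible and the Jacobian of y* at x equals −V₂ (V₂ᵀ ∇_{yy} g(x, y*(x)) V₂)⁻¹ V₂ᵀ (∇_{yx} g(x, y*(x)) − ∇_{yy} g(x, y*(x)) A⁺ ∇h(x)) − A⁺ ∇h(x). -/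
open Matrix
open scoped Kronecker

noncomputable section

/-- `ℝ^n` with the Euclidean inner product. -/
abbrev Euc (n : ℕ) : Type := EuclideanSpace ℝ (Fin n)

/-- Reinterpret a plain vector as an element of Euclidean space. -/
def toEuc {n : ℕ} (v : Fin n → ℝ) : Euc n := WithLp.toLp 2 v

/-- Spectral (operator) norm of a real matrix. -/
def specNorm {m n : Type*} [Fintype m] [Fintype n] [DecidableEq n]
    (M : Matrix m n ℝ) : ℝ :=
  ‖LinearMap.toContinuousLinearMap (Matrix.toEuclideanLin M)‖

/-- The four Moore–Penrose identities. -/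
def IsMoorePenrose {a b : ℕ} (A : Matrix (Fin a) (Fin b) ℝ)
    (Ap : Matrix (Fin b) (Fin a) ℝ) : Prop :=
  A * Ap * A = A ∧ Ap * A * Ap = Ap ∧ (A * Ap)ᵀ = A * Ap ∧ (Ap * A)ᵀ = Ap * A

/-- Partial gradient in the first variable. -/
def gradx {dx dy : ℕ} (f : Euc dx → Euc dy → ℝ) (x : Euc dx) (y : Euc dy) : Euc dx :=
  gradient (fun x' => f x' y) x

/-- Partial gradient in the second variable. -/
def grady {dx dy : ℕ} (f : Euc dx → Euc dy → ℝ) (x : Euc dx) (y : Euc dy) : Euc dy :=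
  gradient (fun y' => f x y') y

/-- Jacobian matrix of a vector-valued map: entry `(i, j)` is `∂φ_i/∂x_j`. -/
def jacM {n m : ℕ} (φ : Euc n → Euc m) (x : Euc n) : Matrix (Fin m) (Fin n) ℝ :=
  Matrix.of fun i j => fderiv ℝ φ x (EuclideanSpace.single j (1 : ℝ)) i

/-- `∇_{yy} g(x,y)`: entry `(i, j)` is `∂²g/∂y_i∂y_j`. -/
def hessYY {dx dy : ℕ} (g : Euc dx → Euc dy → ℝ) (x : Euc dx) (y : Euc dy) :
    Matrix (Fin dy) (Fin dy) ℝ :=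
  Matrix.of fun i j => gradient (fun y' => grady g x y' j) y i

/-- `∇_{xy} g(x,y)`: entry `(i, j)` is `∂²g/∂x_i∂y_j`. -/
def hessXY {dx dy : ℕ} (g : Euc dx → Euc dy → ℝ) (x : Euc dx) (y : Euc dy) :
    Matrix (Fin dx) (Fin dy) ℝ :=
  Matrix.of fun i j => gradient (fun x' => grady g x' y j) x i

/-- `∇_{yx} g(x,y)`: entry `(i, j)` is `∂²g/∂y_i∂x_j`. -/
def hessYX {dx dy : ℕ} (g : Euc dx → Euc dy → ℝ) (x : Euc dx) (y : Euc dy) :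
    Matrix (Fin dy) (Fin dx) ℝ :=
  Matrix.of fun i j => gradient (fun y' => gradx g x y' j) y i

/-- `∇_{xx} g(x,y)`. -/
def hessXX {dx dy : ℕ} (g : Euc dx → Euc dy → ℝ) (x : Euc dx) (y : Euc dy) :
    Matrix (Fin dx) (Fin dx) ℝ :=
  Matrix.of fun i j => gradient (fun x' => gradx g x' y j) x i

/-- The surrogate upper-level gradient `∇̄f(x,y)`. -/
def nablaBarF {dx dy my k : ℕ} (Ap : Matrix (Fin dy) (Fin my) ℝ)
    (V₂ : Matrix (Fin dy) (Fin k) ℝ) (f g : Euc dx → Euc dy → ℝ)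
    (h : Euc dx → Euc my) (x : Euc dx) (y : Euc dy) : Euc dx :=
  gradx f x y + toEuc
    ((((jacM h x)ᵀ * Apᵀ * hessYY g x y - hessXY g x y) * V₂ *
        (V₂ᵀ * hessYY g x y * V₂)⁻¹ * V₂ᵀ - (jacM h x)ᵀ * Apᵀ).mulVec (grady f x y))

section AuxIGF

open scoped RealInnerProductSpace

private lemma igf_gradient_coord {n : ℕ} (f : Euc n → ℝ) (y : Euc n) (j : Fin n) :
    gradient f y j = fderiv ℝ f y (EuclideanSpace.single j (1:ℝ)) := by
  have h1 : gradient f y j = ⟪gradient f y, EuclideanSpace.single j (1:ℝ)⟫ := by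
    rw [EuclideanSpace.inner_single_right]; simp
  rw [h1, gradient, InnerProductSpace.toDual_symm_apply]

private lemma igf_euc_sum_single {n : ℕ} (v : Euc n) :
    v = ∑ i, v i • EuclideanSpace.single i (1:ℝ) := by
  ext j
  have : (∑ i, v i • EuclideanSpace.single i (1:ℝ)) j
      = ∑ i, (v i • EuclideanSpace.single i (1:ℝ)) j :=
    by rw [WithLp.ofLp_sum]; exact Finset.sum_apply j Finset.univ _
  rw [this]
  simp [EuclideanSpace.single_apply, eq_comm]

private lemma igf_clm_expand {n : ℕ} {G : Type*} [NormedAddCommGroup G] [NormedSpace ℝ G]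
    (T : Euc n →L[ℝ] G) (v : Euc n) :
    T v = ∑ i, v i • T (EuclideanSpace.single i (1:ℝ)) := by
  conv_lhs => rw [igf_euc_sum_single v]
  rw [map_sum]
  simp

private lemma igf_hasFDerivAt_fderiv_apply {E G : Type*}
    [NormedAddCommGroup E] [NormedSpace ℝ E]
    [NormedAddCommGroup G] [NormedSpace ℝ G]
    {F : E → ℝ} (hF : ContDiff ℝ 2 F) {φ : G → E} {φ' : G →L[ℝ] E} {z : G}
    (hφ : HasFDerivAt φ φ' z) (w : E) :
    HasFDerivAt (fun u => fderiv ℝ F (φ u) w)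
      ((((fderiv ℝ (fderiv ℝ F) (φ z)).comp φ').flip) w) z := by
  have h2 : Differentiable ℝ (fderiv ℝ F) :=
    (hF.fderiv_right (m := 1) (by norm_num)).differentiable one_ne_zero
  have hc : HasFDerivAt (fun u => fderiv ℝ F (φ u))
      ((fderiv ℝ (fderiv ℝ F) (φ z)).comp φ') z :=
    (h2.differentiableAt.hasFDerivAt).comp z hφ
  have h3 := hc.clm_apply (hasFDerivAt_const w z)
  simpa using h3

private lemma igf_le_deriv_of_slope {q1 : ℝ → ℝ} {d c : ℝ} (hd : HasDerivAt q1 d 0)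
    (hs : ∀ t > (0:ℝ), c * t ≤ q1 t - q1 0) : c ≤ d := by
  have ht : Filter.Tendsto (slope q1 0) (nhdsWithin 0 (Set.Ioi 0)) (nhds d) :=
    (hasDerivAt_iff_tendsto_slope.mp hd).mono_left
      (nhdsWithin_mono _ (fun t ht => Set.mem_compl_singleton_iff.mpr (ne_of_gt ht)))
  refine ge_of_tendsto ht ?_
  filter_upwards [self_mem_nhdsWithin] with t (ht : 0 < t)
  rw [slope_def_field, le_div_iff₀ (by simpa using ht)]
  simpa [mul_comm] using hs t ht

variable {dx dy : ℕ} {g : Euc dx → Euc dy → ℝ} (hg : ContDiff ℝ 2 (Function.uncurry g))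

include hg

private lemma igf_grady_coord_eq (x : Euc dx) (y' : Euc dy) (j : Fin dy) :
    grady g x y' j
      = fderiv ℝ (Function.uncurry g) (x, y') ((0 : Euc dx), EuclideanSpace.single j (1:ℝ)) := by
  rw [grady, igf_gradient_coord]
  have hF : HasFDerivAt (fun y0 => g x y0)
      ((fderiv ℝ (Function.uncurry g) (x, y')).comp (ContinuousLinearMap.inr ℝ (Euc dx) (Euc dy)))
      y' :=
    ((hg.differentiable (by norm_num)) (x, y')).hasFDerivAt.comp y'
      (hasFDerivAt_prodMk_right x y')
  rw [hF.fderiv]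
  simp

private lemma igf_gradx_coord_eq (x : Euc dx) (y' : Euc dy) (j : Fin dx) :
    gradx g x y' j
      = fderiv ℝ (Function.uncurry g) (x, y') (EuclideanSpace.single j (1:ℝ), (0 : Euc dy)) := by
  rw [gradx, igf_gradient_coord]
  have hF : HasFDerivAt (fun x0 => g x0 y')
      ((fderiv ℝ (Function.uncurry g) (x, y')).comp (ContinuousLinearMap.inl ℝ (Euc dx) (Euc dy)))
      x := by
    have h0 := ((hg.differentiable (by norm_num)) (x, y')).hasFDerivAt.comp x
      (hasFDerivAt_prodMk_left (𝕜 := ℝ) x y')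
    exact h0
  rw [hF.fderiv]
  simp

private lemma igf_hessYY_eq (x : Euc dx) (y : Euc dy) (i j : Fin dy) :
    hessYY g x y i j
      = fderiv ℝ (fderiv ℝ (Function.uncurry g)) (x, y)
          ((0 : Euc dx), EuclideanSpace.single i (1:ℝ))
          ((0 : Euc dx), EuclideanSpace.single j (1:ℝ)) := by
  have h1 : (fun y' => grady g x y' j)
      = fun y' => fderiv ℝ (Function.uncurry g) (x, y')
          ((0 : Euc dx), EuclideanSpace.single j (1:ℝ)) := by
    funext y'; exact igf_grady_coord_eq hg x y' j
  have h2 := igf_hasFDerivAt_fderiv_apply hg (hasFDerivAt_prodMk_right x y)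
      ((0 : Euc dx), EuclideanSpace.single j (1:ℝ))
  rw [hessYY, Matrix.of_apply, h1, igf_gradient_coord, h2.fderiv]
  simp

private lemma igf_hessYX_eq (x : Euc dx) (y : Euc dy) (i : Fin dy) (j : Fin dx) :
    hessYX g x y i j
      = fderiv ℝ (fderiv ℝ (Function.uncurry g)) (x, y)
          ((0 : Euc dx), EuclideanSpace.single i (1:ℝ))
          (EuclideanSpace.single j (1:ℝ), (0 : Euc dy)) := by
  have h1 : (fun y' => gradx g x y' j)
      = fun y' => fderiv ℝ (Function.uncurry g) (x, y')
          (EuclideanSpace.single j (1:ℝ), (0 : Euc dy)) := by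
    funext y'; exact igf_gradx_coord_eq hg x y' j
  have h2 := igf_hasFDerivAt_fderiv_apply hg (hasFDerivAt_prodMk_right x y)
      (EuclideanSpace.single j (1:ℝ), (0 : Euc dy))
  rw [hessYX, Matrix.of_apply, h1, igf_gradient_coord, h2.fderiv]
  simp

private lemma igf_sc_hess_bound {μg : ℝ}
    (x : Euc dx)
    (hsc : ConvexOn ℝ Set.univ (fun y : Euc dy => g x y - μg / 2 * ‖y‖ ^ 2))
    (y v : Euc dy) :
    μg * ‖v‖ ^ 2
      ≤ fderiv ℝ (fderiv ℝ (Function.uncurry g)) (x, y) ((0 : Euc dx), v)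
          ((0 : Euc dx), v) := by
  set F := Function.uncurry g with hF
  have hFd : Differentiable ℝ F := hg.differentiable (by norm_num)
  set L : ℝ → Euc dx × Euc dy := fun t => (x, y + t • v) with hL
  have hLd : ∀ t : ℝ, HasDerivAt L (((0 : Euc dx), v)) t := by
    intro t
    refine (hasDerivAt_const t x).prodMk ?_
    simpa using (((hasDerivAt_id t).smul_const v).const_add y)
  set q1 : ℝ → ℝ := fun t => fderiv ℝ F (L t) ((0 : Euc dx), v) with hq1def
  have hq : ∀ t : ℝ, HasDerivAt (fun t => g x (y + t • v)) (q1 t) t := by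
    intro t
    exact (hFd (L t)).hasFDerivAt.comp_hasDerivAt t (hLd t)
  have hq1 : HasDerivAt q1
      (fderiv ℝ (fderiv ℝ F) (x, y) ((0 : Euc dx), v) ((0 : Euc dx), v)) 0 := by
    have h := (igf_hasFDerivAt_fderiv_apply hg (hLd 0).hasFDerivAt ((0 : Euc dx), v)).hasDerivAt
    simp only [hL] at h
    simpa using h
  set r : ℝ → ℝ := fun t => g x (y + t • v)
      - (μg / 2 * ‖y‖ ^ 2 + (μg * ⟪y, v⟫) * t + (μg / 2 * ‖v‖ ^ 2) * t ^ 2) with hrdef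
  have hrconv : ConvexOn ℝ Set.univ r := by
    have h := hsc.comp_affineMap (AffineMap.lineMap y (y + v))
    have heq : ((fun y' : Euc dy => g x y' - μg / 2 * ‖y'‖ ^ 2) ∘
        (AffineMap.lineMap y (y + v))) = r := by
      funext t
      have hl : (AffineMap.lineMap y (y + v) : ℝ → Euc dy) t = y + t • v := by
        simp [AffineMap.lineMap_apply, add_comm]
      simp only [Function.comp_apply, hl, hrdef]
      have hnorm : ‖y + t • v‖ ^ 2 = ‖y‖ ^ 2 + 2 * (t * ⟪y, v⟫) + t ^ 2 * ‖v‖ ^ 2 := by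
        rw [norm_add_sq_real, real_inner_smul_right, norm_smul, Real.norm_eq_abs,
          mul_pow, sq_abs]
      rw [hnorm]; ring
    rw [heq] at h
    simpa using h
  set r1 : ℝ → ℝ := fun t => q1 t - ((μg * ⟪y, v⟫) + (μg * ‖v‖ ^ 2) * t) with hr1def
  have hr : ∀ t : ℝ, HasDerivAt r (r1 t) t := by
    intro t
    have hp : HasDerivAt (fun t : ℝ => μg / 2 * ‖y‖ ^ 2 + (μg * ⟪y, v⟫) * t
        + (μg / 2 * ‖v‖ ^ 2) * t ^ 2)
        ((μg * ⟪y, v⟫) + (μg * ‖v‖ ^ 2) * t) t := by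
      have h1 : HasDerivAt (fun t : ℝ => (μg * ⟪y, v⟫) * t) (μg * ⟪y, v⟫) t := by
        simpa using (hasDerivAt_id t).const_mul (μg * ⟪y, v⟫)
      have h2 : HasDerivAt (fun t : ℝ => (μg / 2 * ‖v‖ ^ 2) * t ^ 2)
          ((μg / 2 * ‖v‖ ^ 2) * (2 * t)) t := by
        simpa using (hasDerivAt_pow 2 t).const_mul (μg / 2 * ‖v‖ ^ 2)
      have := ((hasDerivAt_const t (μg / 2 * ‖y‖ ^ 2)).add h1).add h2
      refine this.congr_deriv ?_
      ring
    exact (hq t).sub hp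
  have hmono := hrconv.monotoneOn_deriv (fun t _ => (hr t).differentiableAt)
  have hr1mono : ∀ t > (0:ℝ), r1 0 ≤ r1 t := by
    intro t ht
    have := hmono (Set.mem_univ 0) (Set.mem_univ t) (le_of_lt ht)
    rwa [(hr 0).deriv, (hr t).deriv] at this
  refine igf_le_deriv_of_slope hq1 ?_
  intro t ht
  have h := hr1mono t ht
  simp only [hr1def] at h
  nlinarith [h]

end AuxIGF


/-- implicit gradient formula for the lower-level solution of a
linearly-constrained strongly-convex problem. -/
theorem implicit_gradient_formula
    {dx dy my k : ℕ}
    (A : Matrix (Fin my) (Fin dy) ℝ) (Ap : Matrix (Fin dy) (Fin my) ℝ)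
    (hMP : IsMoorePenrose A Ap)
    (V₂ : Matrix (Fin dy) (Fin k) ℝ)
    (hV₂orth : V₂ᵀ * V₂ = 1)
    (hV₂ker : LinearMap.range V₂.mulVecLin = LinearMap.ker A.mulVecLin)
    (c : Euc my)
    (g : Euc dx → Euc dy → ℝ)
    (hg : ContDiff ℝ 2 (Function.uncurry g))
    (μg : ℝ) (hμ : 0 < μg)
    (hsc : ∀ x : Euc dx, ConvexOn ℝ Set.univ
      (fun y : Euc dy => g x y - μg / 2 * ‖y‖ ^ 2))
    (h : Euc dx → Euc my) (hh : Differentiable ℝ h)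
    (hfeas : ∀ x : Euc dx, ∃ y : Euc dy, toEuc (A.mulVec y) + h x = c)
    (ystar : Euc dx → Euc dy)
    (hy_feas : ∀ x : Euc dx, toEuc (A.mulVec (ystar x)) + h x = c)
    (hy_min : ∀ x : Euc dx, ∀ y : Euc dy,
      toEuc (A.mulVec y) + h x = c → g x (ystar x) ≤ g x y)
    (x : Euc dx) (hdiff : DifferentiableAt ℝ ystar x) :
    IsUnit (V₂ᵀ * hessYY g x (ystar x) * V₂) ∧
    jacM ystar x =
      -(V₂ * (V₂ᵀ * hessYY g x (ystar x) * V₂)⁻¹ * V₂ᵀ *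
          (hessYX g x (ystar x) - hessYY g x (ystar x) * Ap * jacM h x))
        - Ap * jacM h x := by
  classical
  set y := ystar x with hydef
  set F := Function.uncurry g with hFdef
  have hFd : Differentiable ℝ F := hg.differentiable (by norm_num)
  set D2 := fderiv ℝ (fderiv ℝ F) (x, y) with hD2def
  set H := hessYY g x y with hHdef
  set B := hessYX g x y with hBdef
  set J := jacM ystar x with hJdef
  set N := jacM h x with hNdef
  set ex : Fin dx → Euc dx := fun j => EuclideanSpace.single j (1:ℝ) with hexdef
  set ey : Fin dy → Euc dy := fun i => EuclideanSpace.single i (1:ℝ) with heydef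
  -- entries of the Hessian blocks
  have hHe : ∀ i j, H i j = D2 ((0 : Euc dx), ey i) ((0 : Euc dx), ey j) :=
    fun i j => igf_hessYY_eq hg x y i j
  have hBe : ∀ i j, B i j = D2 ((0 : Euc dx), ey i) (ex j, (0 : Euc dy)) :=
    fun i j => igf_hessYX_eq hg x y i j
  -- symmetry of the second derivative
  have hsymm : ∀ v w : Euc dx × Euc dy, D2 v w = D2 w v := by
    intro v w
    exact (hg.contDiffAt.isSymmSndFDerivAt (by norm_num)).eq v w
  have hHsym : ∀ i j, H i j = H j i := by
    intro i j; rw [hHe, hHe, hsymm]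
  -- expansion of the second derivative in coordinates
  have hexp : ∀ v w : Euc dy,
      D2 ((0 : Euc dx), v) ((0 : Euc dx), w)
        = ∑ j, w j * ∑ i, v i * H i j := by
    intro v w
    have h1 : D2 ((0 : Euc dx), v) ((0 : Euc dx), w)
        = ((D2 ((0 : Euc dx), v)).comp (ContinuousLinearMap.inr ℝ (Euc dx) (Euc dy))) w := rfl
    rw [h1, igf_clm_expand]
    refine Finset.sum_congr rfl fun j _ => ?_
    rw [smul_eq_mul]
    congr 1
    have h2 : (D2 ((0 : Euc dx), v)) ((0 : Euc dx), ey j)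
        = (((D2.comp (ContinuousLinearMap.inr ℝ (Euc dx) (Euc dy))).flip)
            ((0 : Euc dx), ey j)) v := rfl
    rw [ContinuousLinearMap.comp_apply, ContinuousLinearMap.inr_apply, h2, igf_clm_expand]
    refine Finset.sum_congr rfl fun i _ => ?_
    rw [smul_eq_mul, hHe]
    rfl
  have hexpB : ∀ (j : Fin dx) (w : Euc dy),
      D2 (ex j, (0 : Euc dy)) ((0 : Euc dx), w) = ∑ i, w i * B i j := by
    intro j w
    have h1 : D2 (ex j, (0 : Euc dy)) ((0 : Euc dx), w)
        = ((D2 (ex j, (0 : Euc dy))).comp (ContinuousLinearMap.inr ℝ (Euc dx) (Euc dy))) w := rfl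
    rw [h1, igf_clm_expand]
    refine Finset.sum_congr rfl fun i _ => ?_
    rw [smul_eq_mul]
    congr 1
    rw [ContinuousLinearMap.comp_apply, ContinuousLinearMap.inr_apply, hBe, hsymm]
  -- positivity of the quadratic form
  have hquad : ∀ v : Euc dy, μg * ‖v‖ ^ 2 ≤ D2 ((0 : Euc dx), v) ((0 : Euc dx), v) :=
    fun v => igf_sc_hess_bound hg x (hsc x) y v
  -- invertibility
  have hSunit : IsUnit (V₂ᵀ * H * V₂) := by
    rw [← Matrix.mulVec_injective_iff_isUnit]
    have hker : ∀ u : Fin k → ℝ, (V₂ᵀ * H * V₂).mulVec u = 0 → u = 0 := by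
      intro u hu
      set v : Euc dy := toEuc (V₂.mulVec u) with hv
      have h1 : D2 ((0 : Euc dx), v) ((0 : Euc dx), v) = u ⬝ᵥ ((V₂ᵀ * H * V₂).mulVec u) := by
        rw [hexp]
        have hz : (V₂ᵀ * H * V₂).mulVec u = V₂ᵀ.mulVec (H.mulVec (V₂.mulVec u)) := by
          rw [Matrix.mulVec_mulVec, Matrix.mulVec_mulVec]
        rw [hz, dotProduct_mulVec, Matrix.vecMul_transpose]
        show ∑ j, v j * ∑ i, v i * H i j = V₂.mulVec u ⬝ᵥ H.mulVec (V₂.mulVec u)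
        have hvv : (V₂.mulVec u : Fin dy → ℝ) = v := by simp [hv, toEuc]
        rw [hvv]
        simp only [dotProduct, Matrix.mulVec]
        refine Finset.sum_congr rfl fun j _ => ?_
        congr 1
        refine Finset.sum_congr rfl fun i _ => ?_
        rw [hHsym i j]; ring
      have h2 : μg * ‖v‖ ^ 2 ≤ 0 := by
        have h2a := hquad v
        rw [h1, hu] at h2a
        simpa using h2a
      have hv0 : v = 0 := by
        have h3 : ‖v‖ ^ 2 ≤ 0 :=
          le_of_mul_le_mul_left (by simpa using h2) hμ
        have h4 : ‖v‖ = 0 :=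
          pow_eq_zero_iff (two_ne_zero).symm.symm |>.mp (le_antisymm h3 (sq_nonneg _))
        exact norm_eq_zero.mp h4
      have hVu : V₂.mulVec u = 0 := by simpa [hv, toEuc] using congrArg WithLp.ofLp hv0
      calc u = (V₂ᵀ * V₂).mulVec u := by rw [hV₂orth]; simp
        _ = V₂ᵀ.mulVec (V₂.mulVec u) := by rw [← Matrix.mulVec_mulVec]
        _ = 0 := by rw [hVu]; simp [Matrix.mulVec_zero]
    intro a b hab
    have : (V₂ᵀ * H * V₂).mulVec (a - b) = 0 := by
      rw [Matrix.mulVec_sub, hab, sub_self]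
    have := hker _ this
    exact sub_eq_zero.mp this
  -- stationarity
  have hstat : ∀ (x' : Euc dx) (w : Euc dy), A.mulVec w = 0 →
      fderiv ℝ F (x', ystar x') ((0 : Euc dx), w) = 0 := by
    intro x' w hw
    have hLd : ∀ t : ℝ, HasDerivAt (fun t : ℝ => ((x' : Euc dx), ystar x' + t • w))
        ((0 : Euc dx), w) t := by
      intro t
      refine (hasDerivAt_const t x').prodMk ?_
      simpa using (((hasDerivAt_id t).smul_const w).const_add (ystar x'))
    have hq : HasDerivAt (fun t : ℝ => g x' (ystar x' + t • w))
        (fderiv ℝ F (x', ystar x' + (0:ℝ) • w) ((0 : Euc dx), w)) 0 :=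
      (hFd _).hasFDerivAt.comp_hasDerivAt 0 (hLd 0)
    have hmin : IsLocalMin (fun t : ℝ => g x' (ystar x' + t • w)) 0 := by
      apply Filter.Eventually.of_forall
      intro t
      have hmv : A.mulVec (ystar x' + t • w) = A.mulVec (ystar x') := by
        rw [Matrix.mulVec_add, Matrix.mulVec_smul, hw]
        simp
      have hfe : toEuc (A.mulVec (ystar x' + t • w)) + h x' = c := by
        rw [show toEuc (A.mulVec (ystar x' + t • w)) = toEuc (A.mulVec (ystar x'))
          from congrArg toEuc hmv]
        exact hy_feas x'
      have := hy_min x' _ hfe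
      simpa using this
    have h0 := hmin.hasDerivAt_eq_zero hq
    simpa using h0
  -- derivative of the stationarity identity
  have hstatD : ∀ w : Euc dy, A.mulVec w = 0 → ∀ u : Euc dx,
      D2 (u, fderiv ℝ ystar x u) ((0 : Euc dx), w) = 0 := by
    intro w hw u
    have hφ : HasFDerivAt (fun x' : Euc dx => (x', ystar x'))
        ((ContinuousLinearMap.id ℝ (Euc dx)).prod (fderiv ℝ ystar x)) x :=
      (hasFDerivAt_id x).prodMk hdiff.hasFDerivAt
    have hD := igf_hasFDerivAt_fderiv_apply hg hφ ((0 : Euc dx), w)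
    have hzero : (fun x' : Euc dx =>
        fderiv ℝ F ((fun x' : Euc dx => (x', ystar x')) x') ((0 : Euc dx), w))
        = fun _ => (0:ℝ) := by
      funext x'; exact hstat x' w hw
    have hconst : HasFDerivAt (fun x' : Euc dx =>
        fderiv ℝ F ((fun x' : Euc dx => (x', ystar x')) x') ((0 : Euc dx), w))
        (0 : Euc dx →L[ℝ] ℝ) x := by
      rw [hzero]; exact hasFDerivAt_const 0 x
    have heq := hD.unique hconst
    have happ := congrArg (fun T : Euc dx →L[ℝ] ℝ => T u) heq
    simpa using happ
  -- columns of V₂ are in the kernel of A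
  have hcolV : ∀ l : Fin k, A.mulVec (fun i => V₂ i l) = 0 := by
    intro l
    have hmem : (fun i => V₂ i l) ∈ LinearMap.range V₂.mulVecLin := by
      refine ⟨Pi.single l 1, ?_⟩
      rw [Matrix.mulVecLin_apply, Matrix.mulVec_single]
      simp
      rfl
    rw [hV₂ker] at hmem
    simpa [Matrix.mulVecLin_apply] using hmem
  -- the first matrix equation
  have hE1 : V₂ᵀ * (B + H * J) = 0 := by
    ext l j
    have hw := hstatD (toEuc (fun i => V₂ i l)) (by simpa [toEuc] using hcolV l) (ex j)
    have hsplit : (((ex j : Euc dx), fderiv ℝ ystar x (ex j)) : Euc dx × Euc dy)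
        = ((ex j, (0 : Euc dy)) : Euc dx × Euc dy)
          + (((0 : Euc dx), fderiv ℝ ystar x (ex j)) : Euc dx × Euc dy) := by
      simp [Prod.ext_iff]
    rw [hsplit, map_add, ContinuousLinearMap.add_apply, hexpB, hexp] at hw
    have hterm : ∀ i, (∑ m, fderiv ℝ ystar x (ex j) m * H m i) = ∑ m, H i m * J m j := by
      intro i
      refine Finset.sum_congr rfl fun m _ => ?_
      rw [show fderiv ℝ ystar x (ex j) m = J m j from rfl, hHsym m i]
      ring
    have hgoal : (V₂ᵀ * (B + H * J)) l j
        = (∑ i, (toEuc fun i => V₂ i l) i * B i j)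
          + ∑ i, (toEuc fun i => V₂ i l) i * ∑ m, fderiv ℝ ystar x (ex j) m * H m i := by
      simp only [Matrix.mul_apply, Matrix.add_apply, Matrix.transpose_apply, toEuc, mul_add]
      rw [Finset.sum_add_distrib]
      congr 1
      refine Finset.sum_congr rfl fun i _ => ?_
      congr 1
      exact (hterm i).symm
    rw [hgoal, hw]
    rfl
  -- the constraint equation
  have hAJ : A * J = -N := by
    ext r j
    have hterm : ∀ m : Fin dy, HasFDerivAt (fun x' : Euc dx => ystar x' m)
        ((EuclideanSpace.proj m).comp (fderiv ℝ ystar x)) x :=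
      fun m => (EuclideanSpace.proj (𝕜 := ℝ) m).hasFDerivAt.comp x hdiff.hasFDerivAt
    have hsum : HasFDerivAt (fun x' : Euc dx => (∑ m, A r m * ystar x' m) + h x' r)
        ((∑ m, A r m • ((EuclideanSpace.proj m).comp (fderiv ℝ ystar x)))
          + (EuclideanSpace.proj r).comp (fderiv ℝ h x)) x := by
      refine HasFDerivAt.add ?_ ?_
      · exact HasFDerivAt.fun_sum fun m _ => (hterm m).const_mul (A r m)
      · exact (EuclideanSpace.proj (𝕜 := ℝ) r).hasFDerivAt.comp x (hh x).hasFDerivAt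
    have hconstf : (fun x' : Euc dx => (∑ m, A r m * ystar x' m) + h x' r)
        = fun _ => c r := by
      funext x'
      have hfe := congrArg (fun z : Euc my => z r) (hy_feas x')
      simpa [toEuc, Matrix.mulVec, dotProduct, PiLp.add_apply] using hfe
    have h0 : (∑ m, A r m • ((EuclideanSpace.proj m).comp (fderiv ℝ ystar x)))
        + (EuclideanSpace.proj r).comp (fderiv ℝ h x) = 0 :=
      hsum.unique (by rw [hconstf]; exact hasFDerivAt_const (c r) x)
    have happ := congrArg (fun T : Euc dx →L[ℝ] ℝ => T (ex j)) h0
    simp only [ContinuousLinearMap.add_apply, ContinuousLinearMap.coe_sum',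
      Finset.sum_apply, ContinuousLinearMap.smul_apply, ContinuousLinearMap.comp_apply,
      ContinuousLinearMap.zero_apply, PiLp.proj_apply, smul_eq_mul] at happ
    have hgoal : (A * J) r j = ∑ m, A r m * fderiv ℝ ystar x (ex j) m := by
      simp only [Matrix.mul_apply]
      rfl
    have hNrj : (fderiv ℝ h x (ex j)) r = N r j := rfl
    rw [hgoal, Matrix.neg_apply, ← hNrj]
    linarith [happ]
  -- A Ap N = N
  have hANJ : A * Ap * N = N := by
    have hN' : N = -(A * J) := by rw [hAJ]; simp
    rw [hN', Matrix.mul_neg, ← Matrix.mul_assoc (A * Ap) A J, hMP.1]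
  -- columns of J + Ap N lie in ker A = range V₂
  have hK : A * (J + Ap * N) = 0 := by
    rw [Matrix.mul_add, hAJ, ← Matrix.mul_assoc, hANJ]
    simp
  have hproj : V₂ * (V₂ᵀ * (J + Ap * N)) = J + Ap * N := by
    have hUex : ∀ j : Fin dx, ∃ u : Fin k → ℝ,
        V₂.mulVec u = fun m => (J + Ap * N) m j := by
      intro j
      have hcol : A.mulVec (fun m => (J + Ap * N) m j) = 0 := by
        funext r
        have : (A * (J + Ap * N)) r j = 0 := by rw [hK]; rfl
        simpa [Matrix.mul_apply, Matrix.mulVec, dotProduct] using this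
      have hmem : (fun m => (J + Ap * N) m j) ∈ LinearMap.ker A.mulVecLin := by
        rw [LinearMap.mem_ker, Matrix.mulVecLin_apply, hcol]
      rw [← hV₂ker] at hmem
      obtain ⟨u, hu⟩ := hmem
      exact ⟨u, by rw [← Matrix.mulVecLin_apply]; exact hu⟩
    choose U hU using hUex
    have hVU : V₂ * (Matrix.of fun l j => U j l) = J + Ap * N := by
      ext m j
      have := congrFun (hU j) m
      simpa [Matrix.mul_apply, Matrix.mulVec, dotProduct] using this
    calc V₂ * (V₂ᵀ * (J + Ap * N))
        = V₂ * (V₂ᵀ * (V₂ * (Matrix.of fun l j => U j l))) := by rw [hVU]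
      _ = V₂ * ((V₂ᵀ * V₂) * (Matrix.of fun l j => U j l)) := by rw [Matrix.mul_assoc]
      _ = V₂ * (Matrix.of fun l j => U j l) := by rw [hV₂orth, Matrix.one_mul]
      _ = J + Ap * N := hVU
  -- final algebra
  refine ⟨hSunit, ?_⟩
  have hSinv : (V₂ᵀ * H * V₂)⁻¹ * (V₂ᵀ * H * V₂) = 1 :=
    Matrix.nonsing_inv_mul _ ((Matrix.isUnit_iff_isUnit_det _).mp hSunit)
  have h2 : V₂ᵀ * B + V₂ᵀ * (H * J) = 0 := by
    rw [← Matrix.mul_add, hE1]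
  have hSM0 : (V₂ᵀ * H * V₂) * (V₂ᵀ * (J + Ap * N))
      = V₂ᵀ * (H * (Ap * N)) - V₂ᵀ * B := by
    calc (V₂ᵀ * H * V₂) * (V₂ᵀ * (J + Ap * N))
        = V₂ᵀ * H * (V₂ * (V₂ᵀ * (J + Ap * N))) := by rw [Matrix.mul_assoc]
      _ = V₂ᵀ * H * (J + Ap * N) := by rw [hproj]
      _ = V₂ᵀ * (H * J) + V₂ᵀ * (H * (Ap * N)) := by
          rw [Matrix.mul_assoc, Matrix.mul_add, Matrix.mul_add]
      _ = V₂ᵀ * (H * (Ap * N)) - V₂ᵀ * B := by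
          have h3 : V₂ᵀ * (H * J) = -(V₂ᵀ * B) := eq_neg_of_add_eq_zero_right h2
          rw [h3]; abel
  have hM0eq : V₂ᵀ * (J + Ap * N)
      = (V₂ᵀ * H * V₂)⁻¹ * (V₂ᵀ * (H * (Ap * N)) - V₂ᵀ * B) := by
    rw [← hSM0, ← Matrix.mul_assoc, hSinv, Matrix.one_mul]
  have hJeq : J = V₂ * (V₂ᵀ * (J + Ap * N)) - Ap * N := by
    rw [hproj]; abel
  rw [hJeq, hM0eq]
  simp only [Matrix.mul_sub, Matrix.sub_mul, Matrix.mul_assoc, Matrix.mul_neg]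
  abel
end
end

section
/- Let H be a real symmetric d × d matrix with μ I ⪯ H and spectral norm ‖H‖ ≤ ℓ, where 0 < μ ≤ ℓ, let V₂ be a real d × k matrix with orthonormal columns (V₂ᵀ V₂ = I_k), let 0 < c̃ ≤ 1, and let N be a natural number. Then ‖V₂ (V₂ᵀ H V₂)⁻¹ V₂ᵀ − (c̃/ℓ) Σ_{n=0}^{N−1} V₂ (I_k − (c̃/ℓ) V₂ᵀ H V₂)ⁿ V₂ᵀ‖ ≤ (1/μ)(1 − c̃ μ/ℓ)^N, where ‖·‖ is the spectral norm. -/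
open Matrix
open scoped Kronecker

noncomputable section

namespace NeumannAux

lemma inner_eq_dot {n : ℕ} (x y : Fin n → ℝ) : (inner ℝ (toEuc x) (toEuc y) : ℝ) = x ⬝ᵥ y := by
  simp [toEuc, PiLp.inner_apply, dotProduct, RCLike.inner_apply, mul_comm]

lemma normsq_eq_dot {n : ℕ} (x : Fin n → ℝ) : ‖toEuc x‖ ^ 2 = x ⬝ᵥ x := by
  rw [← inner_eq_dot]; exact (real_inner_self_eq_norm_sq _).symm

lemma dot_le_norm {n : ℕ} (x y : Fin n → ℝ) : x ⬝ᵥ y ≤ ‖toEuc x‖ * ‖toEuc y‖ := by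
  rw [← inner_eq_dot]; exact real_inner_le_norm _ _

lemma specNorm_le_of {m n : ℕ} {A : Matrix (Fin m) (Fin n) ℝ} {t : ℝ} (ht : 0 ≤ t)
    (h : ∀ x : Fin n → ℝ, ‖toEuc (A *ᵥ x)‖ ≤ t * ‖toEuc x‖) : specNorm A ≤ t := by
  apply ContinuousLinearMap.opNorm_le_bound _ ht
  intro x
  simpa [toEuc, Matrix.toEuclideanLin_apply] using h x.ofLp

lemma mulVec_norm_le_specNorm {m n : ℕ} (A : Matrix (Fin m) (Fin n) ℝ) (x : Fin n → ℝ) :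
    ‖toEuc (A *ᵥ x)‖ ≤ specNorm A * ‖toEuc x‖ :=
  by simpa [specNorm, toEuc, Matrix.toEuclideanLin_apply] using
    (LinearMap.toContinuousLinearMap (Matrix.toEuclideanLin A)).le_opNorm (toEuc x)

lemma psd_dot {n : ℕ} {A : Matrix (Fin n) (Fin n) ℝ} (h : A.PosSemidef) (x : Fin n → ℝ) :
    0 ≤ x ⬝ᵥ (A *ᵥ x) := by simpa using h.dotProduct_mulVec_nonneg x

lemma herm_of_symm {n : ℕ} {A : Matrix (Fin n) (Fin n) ℝ} (h : Aᵀ = A) : A.IsHermitian := by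
  show Aᴴ = A
  rw [Matrix.conjTranspose_eq_transpose_of_trivial]; exact h

open scoped MatrixOrder in
lemma mulVec_norm_le_of_psd {n : ℕ} {A : Matrix (Fin n) (Fin n) ℝ} {t : ℝ} (ht : 0 ≤ t)
    (hA : A.PosSemidef) (hAt : (t • (1 : Matrix (Fin n) (Fin n) ℝ) - A).PosSemidef)
    (x : Fin n → ℝ) : ‖toEuc (A *ᵥ x)‖ ≤ t * ‖toEuc x‖ := by
  obtain ⟨S, hSconj, hS⟩ : ∃ S : Matrix (Fin n) (Fin n) ℝ, Sᴴ = S ∧ S * S = A :=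
    ⟨CFC.sqrt A, (IsSelfAdjoint.of_nonneg (CFC.sqrt_nonneg A)).star_eq, CFC.sqrt_mul_sqrt_self A hA.nonneg⟩
  have key : (t • A - A * A).PosSemidef := by
    have h1 := hAt.mul_mul_conjTranspose_same S
    have h2 : S * (t • (1 : Matrix (Fin n) (Fin n) ℝ) - A) * Sᴴ
        = t • A - A * A := by
      rw [hSconj, ← hS]
      rw [Matrix.mul_sub, Matrix.sub_mul, Matrix.mul_smul, Matrix.smul_mul, Matrix.mul_one]
      noncomm_ring
    rwa [h2] at h1
  have hAsymm : Aᵀ = A := by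
    rw [← Matrix.conjTranspose_eq_transpose_of_trivial A]; exact hA.1
  have e1 : (A *ᵥ x) ⬝ᵥ (A *ᵥ x) = x ⬝ᵥ ((A * A) *ᵥ x) := by
    rw [← Matrix.mulVec_mulVec, Matrix.dotProduct_mulVec x A, ← Matrix.mulVec_transpose, hAsymm]
  have q1 : x ⬝ᵥ ((A * A) *ᵥ x) ≤ t * (x ⬝ᵥ (A *ᵥ x)) := by
    have := psd_dot key x
    simp only [Matrix.sub_mulVec, Matrix.smul_mulVec, dotProduct_sub, dotProduct_smul,
      smul_eq_mul] at this
    linarith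
  have q2 : x ⬝ᵥ (A *ᵥ x) ≤ t * (x ⬝ᵥ x) := by
    have := psd_dot hAt x
    simp only [Matrix.sub_mulVec, Matrix.smul_mulVec, Matrix.one_mulVec, dotProduct_sub,
      dotProduct_smul, smul_eq_mul] at this
    linarith
  have hn1 : ‖toEuc (A *ᵥ x)‖ ^ 2 ≤ (t * ‖toEuc x‖) ^ 2 := by
    rw [normsq_eq_dot, e1, mul_pow]
    calc x ⬝ᵥ ((A * A) *ᵥ x) ≤ t * (x ⬝ᵥ (A *ᵥ x)) := q1
      _ ≤ t * (t * (x ⬝ᵥ x)) := mul_le_mul_of_nonneg_left q2 ht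
      _ = t ^ 2 * ‖toEuc x‖ ^ 2 := by rw [normsq_eq_dot]; ring
  nlinarith [norm_nonneg (toEuc (A *ᵥ x)), mul_nonneg ht (norm_nonneg (toEuc x))]

end NeumannAux

/-- truncated Neumann-series approximation bound for the projected inverse. -/
theorem neumann_series_truncation_bound
    {d k : ℕ} (H : Matrix (Fin d) (Fin d) ℝ) (hsymm : H.IsSymm)
    (μ ℓ : ℝ) (hμ : 0 < μ) (hμℓ : μ ≤ ℓ)
    (hH : (H - μ • (1 : Matrix (Fin d) (Fin d) ℝ)).PosSemidef)
    (hHn : specNorm H ≤ ℓ)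
    (V₂ : Matrix (Fin d) (Fin k) ℝ) (hV : V₂ᵀ * V₂ = 1)
    (c : ℝ) (hc0 : 0 < c) (hc1 : c ≤ 1) (N : ℕ) :
    specNorm (V₂ * (V₂ᵀ * H * V₂)⁻¹ * V₂ᵀ -
        (c / ℓ) • ∑ n ∈ Finset.range N,
          V₂ * ((1 : Matrix (Fin k) (Fin k) ℝ) - (c / ℓ) • (V₂ᵀ * H * V₂)) ^ n * V₂ᵀ)
      ≤ (1 / μ) * (1 - c * μ / ℓ) ^ N := by
  classical
  open NeumannAux in
  have hℓ : 0 < ℓ := hμ.trans_le hμℓ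
  set B : Matrix (Fin k) (Fin k) ℝ := V₂ᵀ * H * V₂ with hBdef
  set M : Matrix (Fin k) (Fin k) ℝ := (1 : Matrix (Fin k) (Fin k) ℝ) - (c / ℓ) • B with hMdef
  have hVconj : V₂ᴴ = V₂ᵀ := Matrix.conjTranspose_eq_transpose_of_trivial V₂
  -- lower bound PSD for B
  have hBl : (B - μ • (1 : Matrix (Fin k) (Fin k) ℝ)).PosSemidef := by
    have h1 := hH.conjTranspose_mul_mul_same V₂
    have h2 : V₂ᵀ * (H - μ • (1 : Matrix (Fin d) (Fin d) ℝ)) * V₂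
        = B - μ • (1 : Matrix (Fin k) (Fin k) ℝ) := by
      rw [Matrix.mul_sub, Matrix.sub_mul, Matrix.mul_smul, Matrix.mul_one, Matrix.smul_mul, hV,
        hBdef]
    rwa [hVconj, h2] at h1
  -- upper bound PSD for H
  have hHu : ((ℓ • (1 : Matrix (Fin d) (Fin d) ℝ)) - H).PosSemidef := by
    refine Matrix.PosSemidef.of_dotProduct_mulVec_nonneg (herm_of_symm ?_) fun y => ?_
    · rw [Matrix.transpose_sub, Matrix.transpose_smul, Matrix.transpose_one,
        show Hᵀ = H from hsymm]
    · simp only [star_trivial, Matrix.sub_mulVec, Matrix.smul_mulVec, Matrix.one_mulVec,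
        dotProduct_sub, dotProduct_smul, smul_eq_mul]
      have h2 : y ⬝ᵥ (H *ᵥ y) ≤ ‖toEuc y‖ * ‖toEuc (H *ᵥ y)‖ := dot_le_norm _ _
      have h3 : y ⬝ᵥ y = ‖toEuc y‖ ^ 2 := (normsq_eq_dot y).symm
      have h4 : ‖toEuc (H *ᵥ y)‖ ≤ ℓ * ‖toEuc y‖ :=
        (mulVec_norm_le_specNorm H y).trans
          (mul_le_mul_of_nonneg_right hHn (norm_nonneg _))
      nlinarith [norm_nonneg (toEuc y), norm_nonneg (toEuc (H *ᵥ y))]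
  -- upper bound PSD for B
  have hBu : ((ℓ • (1 : Matrix (Fin k) (Fin k) ℝ)) - B).PosSemidef := by
    have h1 := hHu.conjTranspose_mul_mul_same V₂
    have h2 : V₂ᵀ * ((ℓ • (1 : Matrix (Fin d) (Fin d) ℝ)) - H) * V₂
        = (ℓ • (1 : Matrix (Fin k) (Fin k) ℝ)) - B := by
      rw [Matrix.mul_sub, Matrix.sub_mul, Matrix.mul_smul, Matrix.mul_one, Matrix.smul_mul, hV,
        hBdef]
    rwa [hVconj, h2] at h1
  -- quadratic-form bounds for B
  have hq1 : ∀ z : Fin k → ℝ, μ * (z ⬝ᵥ z) ≤ z ⬝ᵥ (B *ᵥ z) := by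
    intro z
    have := psd_dot hBl z
    simp only [Matrix.sub_mulVec, Matrix.smul_mulVec, Matrix.one_mulVec, dotProduct_sub,
      dotProduct_smul, smul_eq_mul] at this
    linarith
  have hq2 : ∀ z : Fin k → ℝ, z ⬝ᵥ (B *ᵥ z) ≤ ℓ * (z ⬝ᵥ z) := by
    intro z
    have := psd_dot hBu z
    simp only [Matrix.sub_mulVec, Matrix.smul_mulVec, Matrix.one_mulVec, dotProduct_sub,
      dotProduct_smul, smul_eq_mul] at this
    linarith
  -- B is positive definite hence invertible
  have hBsymm : Bᵀ = B := by
    rw [hBdef]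
    rw [Matrix.transpose_mul, Matrix.transpose_mul, Matrix.transpose_transpose,
      show Hᵀ = H from hsymm, Matrix.mul_assoc]
  have hBpd : B.PosDef := by
    refine Matrix.PosDef.of_dotProduct_mulVec_pos (herm_of_symm hBsymm) fun z hz => ?_
    have h1 := hq1 z
    have hz2 : 0 < z ⬝ᵥ z := by
      have h3 : z ⬝ᵥ z = ‖toEuc z‖ ^ 2 := (normsq_eq_dot z).symm
      have hz' : toEuc z ≠ 0 := by simpa [toEuc] using hz
      rw [h3]
      exact pow_pos (norm_pos_iff.mpr hz') 2
    simp only [star_trivial]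
    nlinarith
  have hdet : IsUnit B.det := hBpd.det_pos.ne'.isUnit
  have hBBinv : B * B⁻¹ = 1 := Matrix.mul_nonsing_inv _ hdet
  have hBinvB : B⁻¹ * B = 1 := Matrix.nonsing_inv_mul _ hdet
  -- inverse bound
  have hinv : ∀ y : Fin k → ℝ, ‖toEuc (B⁻¹ *ᵥ y)‖ ≤ (1 / μ) * ‖toEuc y‖ := by
    intro y
    set z := B⁻¹ *ᵥ y with hz
    have hBz : B *ᵥ z = y := by rw [hz, Matrix.mulVec_mulVec, hBBinv, Matrix.one_mulVec]
    have h1 : μ * (z ⬝ᵥ z) ≤ z ⬝ᵥ y := by have := hq1 z; rwa [hBz] at this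
    have h2 : z ⬝ᵥ y ≤ ‖toEuc z‖ * ‖toEuc y‖ := dot_le_norm _ _
    have h3 : z ⬝ᵥ z = ‖toEuc z‖ ^ 2 := (normsq_eq_dot z).symm
    rcases eq_or_lt_of_le (norm_nonneg (toEuc z)) with h0 | h0
    · rw [← h0]; positivity
    · have h4 : μ * ‖toEuc z‖ ≤ ‖toEuc y‖ := by nlinarith
      calc ‖toEuc z‖ = (μ * ‖toEuc z‖) / μ := by field_simp
        _ ≤ ‖toEuc y‖ / μ := by gcongr
        _ = (1 / μ) * ‖toEuc y‖ := by ring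
  -- V₂ isometry facts
  have hVt_move : ∀ (w : Fin k → ℝ) (x : Fin d → ℝ),
      w ⬝ᵥ (V₂ᵀ *ᵥ x) = (V₂ *ᵥ w) ⬝ᵥ x := by
    intro w x
    rw [Matrix.dotProduct_mulVec w V₂ᵀ x, Matrix.vecMul_transpose]
  have hViso : ∀ w : Fin k → ℝ, ‖toEuc (V₂ *ᵥ w)‖ = ‖toEuc w‖ := by
    intro w
    have h1 : (V₂ *ᵥ w) ⬝ᵥ (V₂ *ᵥ w) = w ⬝ᵥ w := by
      rw [← hVt_move w (V₂ *ᵥ w), Matrix.mulVec_mulVec, hV, Matrix.one_mulVec]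
    have h2 := normsq_eq_dot (V₂ *ᵥ w)
    rw [h1, ← normsq_eq_dot w] at h2
    have := norm_nonneg (toEuc (V₂ *ᵥ w))
    have := norm_nonneg (toEuc w)
    nlinarith
  have hVtle : ∀ x : Fin d → ℝ, ‖toEuc (V₂ᵀ *ᵥ x)‖ ≤ ‖toEuc x‖ := by
    intro x
    set w := V₂ᵀ *ᵥ x with hw
    have h1 : w ⬝ᵥ w = (V₂ *ᵥ w) ⬝ᵥ x := by rw [hw]; rw [← hVt_move]
    have h2 : (V₂ *ᵥ w) ⬝ᵥ x ≤ ‖toEuc (V₂ *ᵥ w)‖ * ‖toEuc x‖ := dot_le_norm _ _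
    rw [hViso w] at h2
    have h3 := normsq_eq_dot w
    rcases eq_or_lt_of_le (norm_nonneg (toEuc w)) with h0 | h0
    · rw [← h0]; exact norm_nonneg _
    · nlinarith
  -- PSD facts for M
  have hcl : 0 < c / ℓ := div_pos hc0 hℓ
  have hclμ : c / ℓ * μ = c * μ / ℓ := by ring
  have hclℓ : c / ℓ * ℓ = c := div_mul_cancel₀ c hℓ.ne'
  have ht0 : (0 : ℝ) ≤ 1 - c * μ / ℓ := by
    rw [sub_nonneg, div_le_one hℓ]; nlinarith
  have hMsymm : Mᵀ = M := by
    rw [hMdef, Matrix.transpose_sub, Matrix.transpose_smul, Matrix.transpose_one, hBsymm]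
  have hMpsd : M.PosSemidef := by
    refine Matrix.PosSemidef.of_dotProduct_mulVec_nonneg (herm_of_symm hMsymm) fun z => ?_
    simp only [star_trivial, hMdef, Matrix.sub_mulVec, Matrix.smul_mulVec,
      Matrix.one_mulVec, dotProduct_sub, dotProduct_smul, smul_eq_mul]
    have h1 := hq2 z
    have hzz : 0 ≤ z ⬝ᵥ z := by rw [← normsq_eq_dot]; positivity
    have hmul := mul_le_mul_of_nonneg_left h1 hcl.le
    nlinarith
  have hMt : ((1 - c * μ / ℓ) • (1 : Matrix (Fin k) (Fin k) ℝ) - M).PosSemidef := by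
    refine Matrix.PosSemidef.of_dotProduct_mulVec_nonneg (herm_of_symm ?_) fun z => ?_
    · rw [Matrix.transpose_sub, Matrix.transpose_smul, Matrix.transpose_one, hMsymm]
    · simp only [star_trivial, hMdef, Matrix.sub_mulVec, Matrix.smul_mulVec,
        Matrix.one_mulVec, dotProduct_sub, dotProduct_smul, smul_eq_mul]
      have h1 := hq1 z
      have hmul := mul_le_mul_of_nonneg_left h1 hcl.le
      have h2 : c / ℓ * (μ * (z ⬝ᵥ z)) = c * μ / ℓ * (z ⬝ᵥ z) := by ring
      nlinarith [hmul, h2]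
  have hMbound : ∀ z : Fin k → ℝ, ‖toEuc (M *ᵥ z)‖ ≤ (1 - c * μ / ℓ) * ‖toEuc z‖ :=
    fun z => mulVec_norm_le_of_psd ht0 hMpsd hMt z
  have hMpow : ∀ (n : ℕ) (z : Fin k → ℝ),
      ‖toEuc (M ^ n *ᵥ z)‖ ≤ (1 - c * μ / ℓ) ^ n * ‖toEuc z‖ := by
    intro n
    induction n with
    | zero => intro z; simp
    | succ n ih =>
      intro z
      have e : M ^ (n + 1) *ᵥ z = M ^ n *ᵥ (M *ᵥ z) := by
        rw [Matrix.mulVec_mulVec, ← pow_succ]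
      rw [e]
      calc ‖toEuc (M ^ n *ᵥ (M *ᵥ z))‖ ≤ (1 - c * μ / ℓ) ^ n * ‖toEuc (M *ᵥ z)‖ := ih _
        _ ≤ (1 - c * μ / ℓ) ^ n * ((1 - c * μ / ℓ) * ‖toEuc z‖) :=
            mul_le_mul_of_nonneg_left (hMbound z) (pow_nonneg ht0 n)
        _ = (1 - c * μ / ℓ) ^ (n + 1) * ‖toEuc z‖ := by ring
  -- geometric series algebra
  set Sg : Matrix (Fin k) (Fin k) ℝ := ∑ n ∈ Finset.range N, M ^ n with hSg
  have hgeo : ((1 : Matrix (Fin k) (Fin k) ℝ) - M) * Sg = 1 - M ^ N := by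
    have h1 := mul_geom_sum M N
    calc ((1 : Matrix (Fin k) (Fin k) ℝ) - M) * Sg = -((M - 1) * Sg) := by
          rw [← neg_sub M 1, neg_mul]
      _ = -(M ^ N - 1) := by rw [hSg, h1]
      _ = 1 - M ^ N := by rw [neg_sub]
  have hBM : (c / ℓ) • B = 1 - M := by rw [hMdef, sub_sub_cancel]
  have hsum_eq : (c / ℓ) • Sg = B⁻¹ * ((1 : Matrix (Fin k) (Fin k) ℝ) - M ^ N) := by
    rw [← hgeo, ← hBM, Matrix.smul_mul, Matrix.mul_smul, ← Matrix.mul_assoc, hBinvB,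
      Matrix.one_mul]
  have hkey : B⁻¹ - (c / ℓ) • Sg = B⁻¹ * M ^ N := by
    rw [hsum_eq, Matrix.mul_sub, Matrix.mul_one, sub_sub_cancel]
  have hgoalE : V₂ * B⁻¹ * V₂ᵀ - (c / ℓ) • ∑ n ∈ Finset.range N, V₂ * M ^ n * V₂ᵀ
      = V₂ * (B⁻¹ * M ^ N) * V₂ᵀ := by
    have h1 : ∑ n ∈ Finset.range N, V₂ * M ^ n * V₂ᵀ = V₂ * Sg * V₂ᵀ := by
      rw [hSg, Matrix.mul_sum, Matrix.sum_mul]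
    rw [h1, ← Matrix.smul_mul, ← Matrix.mul_smul, ← Matrix.sub_mul, ← Matrix.mul_sub, hkey]
  rw [hgoalE]
  have hrhs0 : (0 : ℝ) ≤ 1 / μ * (1 - c * μ / ℓ) ^ N := by positivity
  apply specNorm_le_of hrhs0
  intro x
  have hdecomp : (V₂ * (B⁻¹ * M ^ N) * V₂ᵀ) *ᵥ x
      = V₂ *ᵥ (B⁻¹ *ᵥ (M ^ N *ᵥ (V₂ᵀ *ᵥ x))) := by
    simp only [Matrix.mulVec_mulVec, Matrix.mul_assoc]
  rw [hdecomp]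
  calc ‖toEuc (V₂ *ᵥ (B⁻¹ *ᵥ (M ^ N *ᵥ (V₂ᵀ *ᵥ x))))‖
      = ‖toEuc (B⁻¹ *ᵥ (M ^ N *ᵥ (V₂ᵀ *ᵥ x)))‖ := hViso _
    _ ≤ (1 / μ) * ‖toEuc (M ^ N *ᵥ (V₂ᵀ *ᵥ x))‖ := hinv _
    _ ≤ (1 / μ) * ((1 - c * μ / ℓ) ^ N * ‖toEuc (V₂ᵀ *ᵥ x)‖) := by
        apply mul_le_mul_of_nonneg_left (hMpow N _) (by positivity)
    _ ≤ (1 / μ) * ((1 - c * μ / ℓ) ^ N * ‖toEuc x‖) := by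
        apply mul_le_mul_of_nonneg_left
          (mul_le_mul_of_nonneg_left (hVtle x) (pow_nonneg ht0 N)) (by positivity)
    _ = 1 / μ * (1 - c * μ / ℓ) ^ N * ‖toEuc x‖ := by ring
end
end

section
/- Fix a point (x,y) ∈ ℝ^{d_x} × ℝ^{d_y}, write H := ∇_{yy} g(x,y), and assume: ‖∇_y f(x,y)‖ ≤ ℓ_{f,0}; H is symmetric with μ_g I ⪯ H and ‖H‖ ≤ ℓ_{g,1} (so 0 < μ_g ≤ ℓ_{g,1}); ‖∇_{xy} g(x,y)‖ ≤ ℓ_{g,1}; ‖∇h(x)‖ ≤ ℓ_{h,0}; and 0 < c̃ ≤ 1. For N ∈ ℕ define the truncated estimator h̄_N(x,y) := ∇_x f(x,y) + [(∇h(x)ᵀ (A⁺)ᵀ H − ∇_{xy} g(x,y)) · (c̃/ℓ_{g,1}) Σ_{n=0}^{N−1} V₂ (I_k − (c̃/ℓ_{g,1}) V₂ᵀ H V₂)ⁿ V₂ᵀ − ∇h(x)ᵀ (A⁺)ᵀ] ∇_y f(x,y). Then ‖h̄_N(x,y) − ∇̄f(x,y)‖ ≤ (1 + ℓ_{h,0}‖A⁺‖)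 ℓ_{g,1} ℓ_{f,0} (1 − c̃ μ_g/ℓ_{g,1})^N / μ_g. -/
open Matrix
open scoped Kronecker

noncomputable section

open scoped Matrix.Norms.L2Operator RealInnerProductSpace

section AuxBias

lemma Bias.specNorm_eq {m n : ℕ} (M : Matrix (Fin m) (Fin n) ℝ) : specNorm M = ‖M‖ := rfl

lemma Bias.norm_mulVec_le {m n : ℕ} (M : Matrix (Fin m) (Fin n) ℝ) (v : Fin n → ℝ) :
    ‖toEuc (M.mulVec v)‖ ≤ ‖M‖ * ‖toEuc v‖ := M.l2_opNorm_mulVec (toEuc v)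

lemma Bias.norm_transpose {m n : ℕ} (M : Matrix (Fin m) (Fin n) ℝ) : ‖Mᵀ‖ = ‖M‖ := by
  rw [← Matrix.l2_opNorm_conjTranspose M]; congr 1

lemma Bias.norm_one_le {n : ℕ} : ‖(1 : Matrix (Fin n) (Fin n) ℝ)‖ ≤ 1 := by
  rw [Matrix.cstar_norm_def, _root_.map_one]; exact ContinuousLinearMap.norm_id_le

lemma Bias.norm_le_one_of_orth {m n : ℕ} (W : Matrix (Fin m) (Fin n) ℝ)
    (h : Wᵀ * W = 1) : ‖W‖ ≤ 1 := by
  have h2 : ‖Wᴴ * W‖ = ‖W‖ * ‖W‖ := Matrix.l2_opNorm_conjTranspose_mul_self W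
  have hc : Wᴴ = Wᵀ := rfl
  rw [hc, h] at h2
  nlinarith [norm_nonneg W, Bias.norm_one_le (n := n)]

lemma Bias.norm_diagonal_le {n : ℕ} {c : ℝ} (hc : 0 ≤ c) (d : Fin n → ℝ)
    (hd : ∀ i, |d i| ≤ c) :
    ‖(Matrix.diagonal d : Matrix (Fin n) (Fin n) ℝ)‖ ≤ c := by
  rw [Matrix.l2_opNorm_def]
  apply ContinuousLinearMap.opNorm_le_bound _ hc
  intro x
  simp only [LinearEquiv.trans_apply, LinearMap.coe_toContinuousLinearMap',
    Matrix.toEuclideanLin_apply]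
  rw [EuclideanSpace.norm_eq, EuclideanSpace.norm_eq]
  rw [← Real.sqrt_sq (by positivity : (0:ℝ) ≤ c), ← Real.sqrt_mul (by positivity)]
  apply Real.sqrt_le_sqrt
  rw [Finset.mul_sum]
  apply Finset.sum_le_sum
  intro i _
  have h0 : (WithLp.toLp 2
        ((Matrix.diagonal d) *ᵥ x.ofLp)).ofLp i = d i * x i := by
    simp [Matrix.mulVec_diagonal]
  rw [h0]
  have h1 : |d i * x i| ≤ c * |x i| := by
    rw [abs_mul]
    exact mul_le_mul_of_nonneg_right (hd i) (abs_nonneg _)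
  have h2 : ‖d i * x i‖ = |d i * x i| := rfl
  have h3 : ‖x i‖ = |x i| := rfl
  rw [h2, h3]
  nlinarith [abs_nonneg (d i * x i), abs_nonneg (x i), sq_abs (d i * x i), sq_abs (x i)]

lemma Bias.eig_lower {k : ℕ} {B : Matrix (Fin k) (Fin k) ℝ} (hB : B.IsHermitian) {μ : ℝ}
    (hlow : (B - μ • (1 : Matrix (Fin k) (Fin k) ℝ)).PosSemidef) (i : Fin k) :
    μ ≤ hB.eigenvalues i := by
  set v : Fin k → ℝ := ⇑(hB.eigenvectorBasis i) with hv
  have h0 := hlow.dotProduct_mulVec_nonneg v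
  have hmv : (B - μ • (1 : Matrix (Fin k) (Fin k) ℝ)) *ᵥ v = (hB.eigenvalues i - μ) • v := by
    rw [Matrix.sub_mulVec, hB.mulVec_eigenvectorBasis, Matrix.smul_mulVec,
      Matrix.one_mulVec, sub_smul]
  rw [hmv] at h0
  have hvv : star v ⬝ᵥ v = 1 := by
    have hn := hB.eigenvectorBasis.orthonormal.1 i
    have h1 : (inner ℝ (hB.eigenvectorBasis i) (hB.eigenvectorBasis i) : ℝ) = star v ⬝ᵥ v := by
      rw [EuclideanSpace.inner_eq_star_dotProduct, dotProduct_comm]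
    rw [← h1, real_inner_self_eq_norm_sq, hn]; norm_num
  rw [dotProduct_smul, hvv, smul_eq_mul, mul_one] at h0
  linarith

lemma Bias.eig_upper {k : ℕ} {B : Matrix (Fin k) (Fin k) ℝ} (hB : B.IsHermitian) {L : ℝ}
    (hup : ‖B‖ ≤ L) (i : Fin k) : |hB.eigenvalues i| ≤ L := by
  set v : EuclideanSpace ℝ (Fin k) := hB.eigenvectorBasis i with hv
  have hnv : ‖v‖ = 1 := hB.eigenvectorBasis.orthonormal.1 i
  have h1 : ‖(WithLp.equiv 2 (Fin k → ℝ)).symm (B *ᵥ (WithLp.equiv 2 (Fin k → ℝ)) v)‖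
      ≤ ‖B‖ * ‖v‖ := B.l2_opNorm_mulVec v
  have h2 : B *ᵥ (WithLp.equiv 2 (Fin k → ℝ)) v
      = hB.eigenvalues i • (WithLp.equiv 2 (Fin k → ℝ)) v := hB.mulVec_eigenvectorBasis i
  rw [h2] at h1
  have h3 : (WithLp.equiv 2 (Fin k → ℝ)).symm
        (hB.eigenvalues i • (WithLp.equiv 2 (Fin k → ℝ)) v) = hB.eigenvalues i • v := rfl
  rw [h3, norm_smul, hnv] at h1
  simp only [mul_one] at h1
  calc |hB.eigenvalues i| = ‖hB.eigenvalues i‖ := rfl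
  _ ≤ ‖B‖ := h1
  _ ≤ L := hup

lemma Bias.inv_mul_pow_bound {k : ℕ} {B : Matrix (Fin k) (Fin k) ℝ} (hB : B.IsHermitian)
    {μ L t : ℝ} (hlow : (B - μ • (1 : Matrix (Fin k) (Fin k) ℝ)).PosSemidef) (hup : ‖B‖ ≤ L)
    (hμ : 0 < μ) (hμL : μ ≤ L) (ht : 0 < t) (htL : t * L ≤ 1) (N : ℕ) :
    B⁻¹ * B = 1 ∧
      ‖B⁻¹ * ((1 : Matrix (Fin k) (Fin k) ℝ) - t • B) ^ N‖ ≤ (1 - t * μ) ^ N / μ := by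
  set U : Matrix (Fin k) (Fin k) ℝ := (hB.eigenvectorUnitary : Matrix (Fin k) (Fin k) ℝ) with hU
  set lam : Fin k → ℝ := hB.eigenvalues with hlam
  have hUl : star U * U = 1 := Unitary.coe_star_mul_self _
  have hUr : U * star U = 1 := Unitary.coe_mul_star_self _
  have hUn : ‖U‖ ≤ 1 := Bias.norm_le_one_of_orth U hUl
  have hUn' : ‖star U‖ ≤ 1 := by
    apply Bias.norm_le_one_of_orth
    show (star U)ᵀ * star U = 1
    have h1 : (star U)ᵀ = U := by
      have h2 : star U = Uᵀ := rfl
      rw [h2, Matrix.transpose_transpose]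
    rw [h1]; exact hUr
  have spec : B = U * Matrix.diagonal lam * star U := by
    have := hB.spectral_theorem
    simpa [RCLike.ofReal_real_eq_id] using this
  have conj_mul : ∀ X Y : Matrix (Fin k) (Fin k) ℝ,
      (U * X * star U) * (U * Y * star U) = U * (X * Y) * star U := by
    intro X Y
    calc (U * X * star U) * (U * Y * star U) = U * X * (star U * U) * (Y * star U) := by
          noncomm_ring
    _ = U * X * (Y * star U) := by rw [hUl, Matrix.mul_one]
    _ = U * (X * Y) * star U := by noncomm_ring
  have conj_pow : ∀ (X : Matrix (Fin k) (Fin k) ℝ) (n : ℕ),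
      (U * X * star U) ^ n = U * X ^ n * star U := by
    intro X n
    induction n with
    | zero => simp only [pow_zero, Matrix.mul_one, hUr]
    | succ n ih => rw [pow_succ, pow_succ, ih, conj_mul]
  have hlo : ∀ i, μ ≤ lam i := Bias.eig_lower hB hlow
  have hhi : ∀ i, |lam i| ≤ L := Bias.eig_upper hB hup
  have hlam_pos : ∀ i, 0 < lam i := fun i => lt_of_lt_of_le hμ (hlo i)
  have htμ : t * μ ≤ 1 := le_trans (by nlinarith) htL
  have hInv : B * (U * Matrix.diagonal (fun i => (lam i)⁻¹) * star U) = 1 := by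
    rw [spec, conj_mul, Matrix.diagonal_mul_diagonal]
    have h5 : (fun i => lam i * (lam i)⁻¹) = fun _ => (1:ℝ) := by
      funext i; exact mul_inv_cancel₀ (ne_of_gt (hlam_pos i))
    rw [h5, Matrix.diagonal_one, Matrix.mul_one, hUr]
  have hBinv : B⁻¹ = U * Matrix.diagonal (fun i => (lam i)⁻¹) * star U :=
    Matrix.inv_eq_right_inv hInv
  have hBiB : B⁻¹ * B = 1 := by
    rw [hBinv]; exact mul_eq_one_comm.mp hInv
  refine ⟨hBiB, ?_⟩
  have hX : (1 : Matrix (Fin k) (Fin k) ℝ) - t • B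
      = U * Matrix.diagonal (fun i => 1 - t * lam i) * star U := by
    have h1 : (1 : Matrix (Fin k) (Fin k) ℝ) = U * 1 * star U := by
      rw [Matrix.mul_one, hUr]
    have h2 : t • B = U * (t • Matrix.diagonal lam) * star U := by
      rw [spec, ← Matrix.smul_mul, ← Matrix.mul_smul]
    have h3 : (1 : Matrix (Fin k) (Fin k) ℝ) - t • Matrix.diagonal lam
        = Matrix.diagonal (fun i => 1 - t * lam i) := by
      ext i j
      rcases eq_or_ne i j with rfl | hij
      · simp
      · simp [Matrix.one_apply_ne hij, Matrix.diagonal_apply_ne _ hij]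
    rw [h1, h2, ← Matrix.sub_mul, ← Matrix.mul_sub, h3]
  have key : B⁻¹ * ((1 : Matrix (Fin k) (Fin k) ℝ) - t • B) ^ N
      = U * Matrix.diagonal (fun i => (lam i)⁻¹ * (1 - t * lam i) ^ N) * star U := by
    rw [hBinv, hX, conj_pow, conj_mul, Matrix.diagonal_pow, Matrix.diagonal_mul_diagonal]
    congr 1
  rw [key]
  have hq : (0:ℝ) ≤ (1 - t * μ) ^ N / μ := by
    apply div_nonneg _ (le_of_lt hμ)
    apply pow_nonneg; linarith
  have hdiag : ‖(Matrix.diagonal (fun i => (lam i)⁻¹ * (1 - t * lam i) ^ N)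
      : Matrix (Fin k) (Fin k) ℝ)‖ ≤ (1 - t * μ) ^ N / μ := by
    apply Bias.norm_diagonal_le hq
    intro i
    have h1 : 0 ≤ 1 - t * lam i := by
      have h6 : lam i ≤ L := le_trans (le_abs_self _) (hhi i)
      nlinarith
    have h2 : (1 - t * lam i) ^ N ≤ (1 - t * μ) ^ N := by
      apply pow_le_pow_left₀ h1
      nlinarith [hlo i]
    have h3 : (lam i)⁻¹ ≤ μ⁻¹ := inv_anti₀ hμ (hlo i)
    have h4 : (0:ℝ) ≤ (lam i)⁻¹ := le_of_lt (inv_pos.mpr (hlam_pos i))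
    rw [abs_of_nonneg (mul_nonneg h4 (pow_nonneg h1 N))]
    rw [div_eq_mul_inv, mul_comm ((1 - t*μ)^N)]
    exact mul_le_mul h3 h2 (pow_nonneg h1 N) (le_of_lt (inv_pos.mpr hμ))
  calc ‖U * Matrix.diagonal (fun i => (lam i)⁻¹ * (1 - t * lam i) ^ N) * star U‖
      ≤ ‖U * Matrix.diagonal (fun i => (lam i)⁻¹ * (1 - t * lam i) ^ N)‖ * ‖star U‖ :=
        Matrix.l2_opNorm_mul _ _
    _ ≤ ‖U‖ * ‖(Matrix.diagonal (fun i => (lam i)⁻¹ * (1 - t * lam i) ^ N)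
          : Matrix (Fin k) (Fin k) ℝ)‖ * ‖star U‖ :=
        mul_le_mul_of_nonneg_right (Matrix.l2_opNorm_mul _ _) (norm_nonneg _)
    _ ≤ 1 * ((1 - t * μ) ^ N / μ) * 1 := by
        apply mul_le_mul _ hUn' (norm_nonneg _) (by positivity)
        exact mul_le_mul hUn hdiag (norm_nonneg _) zero_le_one
    _ = (1 - t * μ) ^ N / μ := by ring

end AuxBias

/-- bias of the truncated Neumann-series gradient estimator. -/
theorem truncated_estimator_bias_bound
    {dx dy my k : ℕ}
    (A : Matrix (Fin my) (Fin dy) ℝ) (Ap : Matrix (Fin dy) (Fin my) ℝ)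
    (hMP : IsMoorePenrose A Ap)
    (V₂ : Matrix (Fin dy) (Fin k) ℝ)
    (hV₂orth : V₂ᵀ * V₂ = 1)
    (hV₂ker : LinearMap.range V₂.mulVecLin = LinearMap.ker A.mulVecLin)
    (f g : Euc dx → Euc dy → ℝ) (h : Euc dx → Euc my)
    (x : Euc dx) (y : Euc dy)
    (ℓf0 μg ℓg1 ℓh0 c : ℝ)
    (hf0 : ‖grady f x y‖ ≤ ℓf0)
    (hsymm : (hessYY g x y).IsSymm)
    (hpsd : (hessYY g x y - μg • (1 : Matrix (Fin dy) (Fin dy) ℝ)).PosSemidef)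
    (hHn : specNorm (hessYY g x y) ≤ ℓg1)
    (hμ : 0 < μg) (hμℓ : μg ≤ ℓg1)
    (hxy : specNorm (hessXY g x y) ≤ ℓg1)
    (hjh : specNorm (jacM h x) ≤ ℓh0)
    (hc0 : 0 < c) (hc1 : c ≤ 1) (N : ℕ) :
    ‖(gradx f x y + toEuc
        ((((jacM h x)ᵀ * Apᵀ * hessYY g x y - hessXY g x y) *
            ((c / ℓg1) • ∑ n ∈ Finset.range N,
              V₂ * ((1 : Matrix (Fin k) (Fin k) ℝ)
                  - (c / ℓg1) • (V₂ᵀ * hessYY g x y * V₂)) ^ n * V₂ᵀ)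
          - (jacM h x)ᵀ * Apᵀ).mulVec (grady f x y)))
      - nablaBarF Ap V₂ f g h x y‖
      ≤ (1 + ℓh0 * specNorm Ap) * ℓg1 * ℓf0 * (1 - c * μg / ℓg1) ^ N / μg := by
  classical
  simp only [nablaBarF]
  rw [Bias.specNorm_eq] at hHn hxy hjh
  rw [Bias.specNorm_eq]
  set H := hessYY g x y with hHdef
  set XY := hessXY g x y with hXYdef
  set Jm := (jacM h x)ᵀ * Apᵀ with hJmdef
  set B := V₂ᵀ * H * V₂ with hBdef
  set t := c / ℓg1 with htdef
  set v := grady f x y with hvdef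
  set M := Jm * H - XY with hMdef
  set Xm := (1 : Matrix (Fin k) (Fin k) ℝ) - t • B with hXmdef
  have hℓg1 : 0 < ℓg1 := lt_of_lt_of_le hμ hμℓ
  have ht0 : 0 < t := div_pos hc0 hℓg1
  have htL : t * ℓg1 ≤ 1 := by
    rw [htdef, div_mul_cancel₀ c (ne_of_gt hℓg1)]; exact hc1
  have hℓf0 : 0 ≤ ℓf0 := le_trans (norm_nonneg _) hf0
  have hℓh0 : 0 ≤ ℓh0 := le_trans (norm_nonneg _) hjh
  have hnAp : 0 ≤ ‖Ap‖ := norm_nonneg _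
  have hamax : 0 ≤ (1 + ℓh0 * ‖Ap‖) * ℓg1 :=
    mul_nonneg (by nlinarith [mul_nonneg hℓh0 hnAp]) (le_of_lt hℓg1)
  -- B is Hermitian
  have hBh : B.IsHermitian := by
    show Bᴴ = B
    have h1 : Bᴴ = Bᵀ := rfl
    rw [h1, hBdef, Matrix.transpose_mul, Matrix.transpose_mul, Matrix.transpose_transpose,
      hsymm.eq, ← Matrix.mul_assoc]
  -- lower bound for B
  have hlow : (B - μg • (1 : Matrix (Fin k) (Fin k) ℝ)).PosSemidef := by
    have h1 := hpsd.conjTranspose_mul_mul_same V₂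
    have h2 : V₂ᴴ * (H - μg • 1) * V₂ = B - μg • 1 := by
      have hC : V₂ᴴ = V₂ᵀ := rfl
      rw [hC, Matrix.mul_sub, Matrix.sub_mul, Matrix.mul_smul, Matrix.mul_one,
        Matrix.smul_mul, hV₂orth, hBdef]
    rwa [h2] at h1
  have hnV₂ : ‖V₂‖ ≤ 1 := Bias.norm_le_one_of_orth V₂ hV₂orth
  have hnV₂t : ‖V₂ᵀ‖ ≤ 1 := by rw [Bias.norm_transpose]; exact hnV₂
  have hupB : ‖B‖ ≤ ℓg1 := by
    calc ‖V₂ᵀ * H * V₂‖ ≤ ‖V₂ᵀ * H‖ * ‖V₂‖ := Matrix.l2_opNorm_mul _ _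
      _ ≤ ‖V₂ᵀ‖ * ‖H‖ * ‖V₂‖ :=
          mul_le_mul_of_nonneg_right (Matrix.l2_opNorm_mul _ _) (norm_nonneg _)
      _ ≤ 1 * ℓg1 * 1 :=
          mul_le_mul (mul_le_mul hnV₂t hHn (norm_nonneg _) zero_le_one) hnV₂ (norm_nonneg _)
            (mul_nonneg zero_le_one (le_of_lt hℓg1))
      _ = ℓg1 := by ring
  obtain ⟨hBiB, hNbound⟩ := Bias.inv_mul_pow_bound hBh hlow hupB hμ hμℓ ht0 htL N
  rw [← hXmdef] at hNbound
  -- key matrix identity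
  set Sm := ∑ n ∈ Finset.range N, Xm ^ n with hSdef
  have hWmat : (M * (t • ∑ n ∈ Finset.range N, V₂ * Xm ^ n * V₂ᵀ) - Jm)
      - (M * V₂ * B⁻¹ * V₂ᵀ - Jm) = -(M * V₂ * (B⁻¹ * Xm ^ N) * V₂ᵀ) := by
    have hs1 : ∑ n ∈ Finset.range N, V₂ * Xm ^ n * V₂ᵀ = V₂ * Sm * V₂ᵀ := by
      rw [hSdef, Matrix.mul_sum, Matrix.sum_mul]
    have hgeo : (t • B) * Sm = 1 - Xm ^ N := by
      have h1 : t • B = 1 - Xm := by rw [hXmdef]; abel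
      calc (t • B) * Sm = -((Xm - 1) * Sm) := by rw [h1]; noncomm_ring
        _ = -(Xm ^ N - 1) := by rw [mul_geom_sum]
        _ = 1 - Xm ^ N := by abel
    have hdiff : (t • Sm) - B⁻¹ = -(B⁻¹ * Xm ^ N) := by
      have h1 : B⁻¹ * ((t • B) * Sm) = t • Sm := by
        rw [← Matrix.mul_assoc, Matrix.mul_smul, hBiB, Matrix.smul_mul, Matrix.one_mul]
      rw [← h1, hgeo, Matrix.mul_sub, Matrix.mul_one]
      abel
    have hfac : ∀ S' C : Matrix (Fin k) (Fin k) ℝ,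
        M * (V₂ * S' * V₂ᵀ) - M * V₂ * C * V₂ᵀ = (M * V₂) * (S' - C) * V₂ᵀ := by
      intro S' C
      simp only [Matrix.mul_sub, Matrix.sub_mul, Matrix.mul_assoc]
    have hts : t • (V₂ * Sm * V₂ᵀ) = V₂ * (t • Sm) * V₂ᵀ := by
      rw [← Matrix.smul_mul, ← Matrix.mul_smul]
    rw [sub_sub_sub_cancel_right, hs1, hts, hfac, hdiff]
    rw [Matrix.mul_assoc (M * V₂), Matrix.neg_mul, Matrix.mul_neg, ← Matrix.mul_assoc,
      ← Matrix.mul_assoc]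
  -- vector identity
  rw [add_sub_add_left_eq_sub]
  have h0 : ∀ a b : Fin dx → ℝ, toEuc a - toEuc b = toEuc (a - b) := fun _ _ => rfl
  have h1 : toEuc ((M * (t • ∑ n ∈ Finset.range N, V₂ * Xm ^ n * V₂ᵀ) - Jm).mulVec v)
      - toEuc ((M * V₂ * B⁻¹ * V₂ᵀ - Jm).mulVec v)
      = -(toEuc ((M * V₂ * (B⁻¹ * Xm ^ N) * V₂ᵀ).mulVec v)) := by
    rw [h0, ← Matrix.sub_mulVec, hWmat, Matrix.neg_mulVec]
    rfl
  rw [h1, norm_neg]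
  -- norm bound on M
  have hMn : ‖M‖ ≤ (1 + ℓh0 * ‖Ap‖) * ℓg1 := by
    have h2 : ‖Jm * H‖ ≤ (ℓh0 * ‖Ap‖) * ℓg1 := by
      calc ‖Jm * H‖ ≤ ‖Jm‖ * ‖H‖ := Matrix.l2_opNorm_mul _ _
        _ ≤ (ℓh0 * ‖Ap‖) * ℓg1 := by
            apply mul_le_mul _ hHn (norm_nonneg _) (mul_nonneg hℓh0 hnAp)
            calc ‖(jacM h x)ᵀ * Apᵀ‖ ≤ ‖(jacM h x)ᵀ‖ * ‖Apᵀ‖ := Matrix.l2_opNorm_mul _ _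
              _ ≤ ℓh0 * ‖Ap‖ := by
                  rw [Bias.norm_transpose, Bias.norm_transpose]
                  exact mul_le_mul_of_nonneg_right hjh hnAp
    calc ‖Jm * H - XY‖ ≤ ‖Jm * H‖ + ‖XY‖ := norm_sub_le _ _
      _ ≤ (ℓh0 * ‖Ap‖) * ℓg1 + ℓg1 := add_le_add h2 hxy
      _ = (1 + ℓh0 * ‖Ap‖) * ℓg1 := by ring
  set q := (1 - t * μg) ^ N / μg with hqdef
  have htμ1 : 0 ≤ 1 - t * μg := by
    have hh := mul_le_mul_of_nonneg_left hμℓ (le_of_lt ht0)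
    linarith
  have hq0 : 0 ≤ q := div_nonneg (pow_nonneg htμ1 _) (le_of_lt hμ)
  have hZn : ‖M * V₂ * (B⁻¹ * Xm ^ N) * V₂ᵀ‖ ≤ ((1 + ℓh0 * ‖Ap‖) * ℓg1) * q := by
    calc ‖M * V₂ * (B⁻¹ * Xm ^ N) * V₂ᵀ‖
        ≤ ‖M * V₂ * (B⁻¹ * Xm ^ N)‖ * ‖V₂ᵀ‖ := Matrix.l2_opNorm_mul _ _
      _ ≤ ‖M * V₂ * (B⁻¹ * Xm ^ N)‖ := mul_le_of_le_one_right (norm_nonneg _) hnV₂t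
      _ ≤ ‖M * V₂‖ * ‖B⁻¹ * Xm ^ N‖ := Matrix.l2_opNorm_mul _ _
      _ ≤ ((1 + ℓh0 * ‖Ap‖) * ℓg1) * q := by
          apply mul_le_mul _ hNbound (norm_nonneg _) hamax
          calc ‖M * V₂‖ ≤ ‖M‖ * ‖V₂‖ := Matrix.l2_opNorm_mul _ _
            _ ≤ ((1 + ℓh0 * ‖Ap‖) * ℓg1) * 1 :=
                mul_le_mul hMn hnV₂ (norm_nonneg _) hamax
            _ = (1 + ℓh0 * ‖Ap‖) * ℓg1 := mul_one _
  have hvle : ‖toEuc v‖ ≤ ℓf0 := hf0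
  calc ‖toEuc ((M * V₂ * (B⁻¹ * Xm ^ N) * V₂ᵀ).mulVec v)‖
      ≤ ‖M * V₂ * (B⁻¹ * Xm ^ N) * V₂ᵀ‖ * ‖toEuc v‖ := Bias.norm_mulVec_le _ _
    _ ≤ (((1 + ℓh0 * ‖Ap‖) * ℓg1) * q) * ℓf0 :=
        mul_le_mul hZn hvle (norm_nonneg _) (mul_nonneg hamax hq0)
    _ = (1 + ℓh0 * ‖Ap‖) * ℓg1 * ℓf0 * (1 - c * μg / ℓg1) ^ N / μg := by
        rw [hqdef, htdef, div_mul_eq_mul_div]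
        ring
end
end

section
/- Let E be a real inner product space, let φ : E → ℝ be differentiable, μ-strongly convex (μ > 0), and suppose its gradient ∇φ is L-Lipschitz. Then for every β with 0 < β ≤ 1/L and all y₁, y₂ ∈ E, ‖(y₁ − β ∇φ(y₁)) − (y₂ − β ∇φ(y₂))‖² ≤ (1 − βμ)‖y₁ − y₂‖². -/
open Matrix
open scoped Kronecker

noncomputable section

open scoped RealInnerProductSpace


section GradHelpers



variable {F : Type*} [NormedAddCommGroup F] [InnerProductSpace ℝ F]

lemma aux_line_hasDerivAt (φ : F → ℝ) (G : F → F)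
    (hG : ∀ y : F, HasFDerivAt φ ((innerSL ℝ (G y)) : F →L[ℝ] ℝ) y) (x y : F) (t : ℝ) :
    HasDerivAt (fun t : ℝ => φ (x + t • (y - x))) ⟪G (x + t • (y - x)), y - x⟫ t := by
  have h1 : HasDerivAt (fun t : ℝ => x + t • (y - x)) (y - x) t := by
    simpa using ((hasDerivAt_id t).smul_const (y - x)).const_add x
  have h2 := (hG (x + t • (y - x))).comp_hasDerivAt t h1
  simp at h2
  exact h2

lemma aux_grad_ineq (φ : F → ℝ) (G : F → F)
    (hG : ∀ y : F, HasFDerivAt φ ((innerSL ℝ (G y)) : F →L[ℝ] ℝ) y)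
    (hconv : ConvexOn ℝ Set.univ φ) (x y : F) :
    φ x + ⟪G x, y - x⟫ ≤ φ y := by
  have hconvf : ConvexOn ℝ Set.univ (fun t : ℝ => φ (x + t • (y - x))) := by
    have hfe : (fun t : ℝ => φ (x + t • (y - x))) = φ ∘ (AffineMap.lineMap x y : ℝ →ᵃ[ℝ] F) := by
      funext t
      simp [AffineMap.lineMap_apply, add_comm]
    rw [hfe]
    simpa using hconv.comp_affineMap (AffineMap.lineMap x y : ℝ →ᵃ[ℝ] F)
  have hs := hconvf.le_slope_of_hasDerivAt (Set.mem_univ (0:ℝ)) (Set.mem_univ (1:ℝ))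
    one_pos (aux_line_hasDerivAt φ G hG x y 0)
  simp [slope_def_field] at hs
  linarith

lemma aux_convexOn_of_monotone (φ : F → ℝ) (G : F → F)
    (hG : ∀ y : F, HasFDerivAt φ ((innerSL ℝ (G y)) : F →L[ℝ] ℝ) y)
    (hmono : ∀ x y : F, 0 ≤ ⟪G x - G y, x - y⟫) :
    ConvexOn ℝ Set.univ φ := by
  refine ⟨convex_univ, ?_⟩
  intro x _ y _ a b ha hb hab
  have hd := aux_line_hasDerivAt φ G hG x y
  have hdiff : Differentiable ℝ (fun t : ℝ => φ (x + t • (y - x))) :=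
    fun t => (hd t).differentiableAt
  have hmonod : Monotone (deriv (fun t : ℝ => φ (x + t • (y - x)))) := by
    intro s t hst
    rw [(hd s).deriv, (hd t).deriv]
    rcases eq_or_lt_of_le hst with rfl | h
    · exact le_rfl
    have h0 := hmono (x + t • (y - x)) (x + s • (y - x))
    have hxy : (x + t • (y - x)) - (x + s • (y - x)) = (t - s) • (y - x) := by
      rw [sub_smul]; abel
    rw [hxy, real_inner_smul_right, inner_sub_left] at h0
    nlinarith [h0]
  have hconvf := Monotone.convexOn_univ_of_deriv hdiff hmonod
  have key := hconvf.2 (Set.mem_univ (0:ℝ)) (Set.mem_univ (1:ℝ)) ha hb hab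
  have ha' : a = 1 - b := by linarith
  subst ha'
  have hpt : x + b • (y - x) = (1 - b) • x + b • y := by module
  simp only [smul_eq_mul, mul_zero, mul_one, zero_add, zero_smul, one_smul, add_zero,
    add_sub_cancel] at key
  rw [← hpt]
  simpa using key

lemma aux_monotone_of_convex (φ : F → ℝ) (G : F → F)
    (hG : ∀ y : F, HasFDerivAt φ ((innerSL ℝ (G y)) : F →L[ℝ] ℝ) y)
    (hconv : ConvexOn ℝ Set.univ φ) (x y : F) :
    0 ≤ ⟪G x - G y, x - y⟫ := by
  have h1 := aux_grad_ineq φ G hG hconv x y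
  have h2 := aux_grad_ineq φ G hG hconv y x
  have e : ⟪G x - G y, x - y⟫ = -(⟪G x, y - x⟫ + ⟪G y, x - y⟫) := by
    simp [inner_sub_left, inner_sub_right]; ring
  rw [e]
  linarith

lemma aux_normsq_deriv (c : ℝ) (z : F) :
    HasFDerivAt (fun w : F => c * ‖w‖ ^ 2) ((innerSL ℝ ((2 * c) • z)) : F →L[ℝ] ℝ) z := by
  have h := (((hasFDerivAt_id (𝕜 := ℝ) z).inner ℝ (hasFDerivAt_id (𝕜 := ℝ) z)).const_mul c)
  have he : (fun y : F => c * ⟪id y, id y⟫) = fun w : F => c * ‖w‖ ^ 2 := by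
    funext w; rw [id, real_inner_self_eq_norm_sq]
  rw [he] at h
  refine h.congr_fderiv ?_
  ext v
  simp [fderivInnerCLM, real_inner_smul_left, real_inner_comm]
  ring


lemma aux_add_normsq_deriv (φ : F → ℝ) (G : F → F)
    (hG : ∀ y : F, HasFDerivAt φ ((innerSL ℝ (G y)) : F →L[ℝ] ℝ) y) (c : ℝ) (z : F) :
    HasFDerivAt (fun w : F => φ w + c * ‖w‖ ^ 2)
      ((innerSL ℝ (G z + (2 * c) • z)) : F →L[ℝ] ℝ) z := by
  have h := (hG z).add (aux_normsq_deriv c z)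
  refine h.congr_fderiv ?_
  ext v
  simp [inner_add_left]

lemma aux_sub_normsq_deriv (φ : F → ℝ) (G : F → F)
    (hG : ∀ y : F, HasFDerivAt φ ((innerSL ℝ (G y)) : F →L[ℝ] ℝ) y) (L : ℝ) (z : F) :
    HasFDerivAt (fun w : F => L / 2 * ‖w‖ ^ 2 - φ w)
      ((innerSL ℝ (L • z - G z)) : F →L[ℝ] ℝ) z := by
  have h := (aux_normsq_deriv (L / 2) z).sub (hG z)
  refine h.congr_fderiv ?_
  ext v
  simp only [ContinuousLinearMap.coe_sub', Pi.sub_apply, innerSL_apply_apply, inner_sub_left,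
    real_inner_smul_left]
  ring

lemma aux_strong_mono (φ : F → ℝ) (G : F → F)
    (hG : ∀ y : F, HasFDerivAt φ ((innerSL ℝ (G y)) : F →L[ℝ] ℝ) y) (μ : ℝ)
    (hsc : ConvexOn ℝ Set.univ (fun y : F => φ y - μ / 2 * ‖y‖ ^ 2)) (x y : F) :
    μ * ‖x - y‖ ^ 2 ≤ ⟪G x - G y, x - y⟫ := by
  have hψG : ∀ z : F, HasFDerivAt (fun w : F => φ w + (-(μ/2)) * ‖w‖ ^ 2)
      ((innerSL ℝ (G z + (2 * (-(μ/2))) • z)) : F →L[ℝ] ℝ) z :=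
    fun z => aux_add_normsq_deriv φ G hG _ z
  have hψconv : ConvexOn ℝ Set.univ (fun w : F => φ w + (-(μ/2)) * ‖w‖ ^ 2) := by
    have he : (fun w : F => φ w + (-(μ/2)) * ‖w‖ ^ 2)
        = fun w : F => φ w - μ / 2 * ‖w‖ ^ 2 := by
      funext w; ring
    rw [he]; exact hsc
  have h := aux_monotone_of_convex _ _ hψG hψconv x y
  have hv : (G x + (2 * (-(μ/2))) • x) - (G y + (2 * (-(μ/2))) • y)
      = (G x - G y) + (-μ) • (x - y) := by
    have h2 : (2 * (-(μ/2))) = -μ := by ring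
    rw [h2]; module
  rw [hv, inner_add_left, real_inner_smul_left, real_inner_self_eq_norm_sq] at h
  linarith

lemma aux_descent (φ : F → ℝ) (G : F → F)
    (hG : ∀ y : F, HasFDerivAt φ ((innerSL ℝ (G y)) : F →L[ℝ] ℝ) y) (L : ℝ)
    (hLip : ∀ y₁ y₂ : F, ‖G y₁ - G y₂‖ ≤ L * ‖y₁ - y₂‖) (x y : F) :
    φ y ≤ φ x + ⟪G x, y - x⟫ + L / 2 * ‖y - x‖ ^ 2 := by
  have hηG := aux_sub_normsq_deriv φ G hG L
  have hmono : ∀ u v : F, 0 ≤ ⟪(L • u - G u) - (L • v - G v), u - v⟫ := by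
    intro u v
    have hv : (L • u - G u) - (L • v - G v) = L • (u - v) - (G u - G v) := by module
    rw [hv, inner_sub_left, real_inner_smul_left, real_inner_self_eq_norm_sq]
    have hcs := real_inner_le_norm (G u - G v) (u - v)
    have hl := hLip u v
    nlinarith [norm_nonneg (u - v), norm_nonneg (G u - G v)]
  have hηconv := aux_convexOn_of_monotone _ _ hηG hmono
  have h := aux_grad_ineq _ _ hηG hηconv x y
  have hn : ‖y - x‖ ^ 2 = ‖y‖ ^ 2 - 2 * ⟪x, y⟫ + ‖x‖ ^ 2 := by
    rw [norm_sub_sq_real y x, real_inner_comm y x]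
  rw [hn]
  simp only [inner_sub_left, inner_sub_right, real_inner_smul_left,
    real_inner_self_eq_norm_sq] at h ⊢
  linarith

lemma aux_half (φ : F → ℝ) (G : F → F)
    (hG : ∀ y : F, HasFDerivAt φ ((innerSL ℝ (G y)) : F →L[ℝ] ℝ) y)
    (hconv : ConvexOn ℝ Set.univ φ) (L t : ℝ) (hLt : L * t = 1)
    (hLip : ∀ y₁ y₂ : F, ‖G y₁ - G y₂‖ ≤ L * ‖y₁ - y₂‖) (u v : F) :
    φ u ≤ φ v + ⟪G u, u - v⟫ - t / 2 * ‖G v - G u‖ ^ 2 := by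
  set g : F := G v - G u with hg
  set w : F := v - t • g with hw
  have hmin := aux_grad_ineq φ G hG hconv u w
  have hdes := aux_descent φ G hG L hLip v w
  have hwv : w - v = -(t • g) := by rw [hw]; module
  have hwu : w - u = (v - u) - t • g := by rw [hw]; module
  have h1 : ⟪G v, w - v⟫ = -(t * ⟪G v, g⟫) := by
    rw [hwv, inner_neg_right, real_inner_smul_right]
  have h2 : ‖w - v‖ ^ 2 = t ^ 2 * ‖g‖ ^ 2 := by
    rw [hwv, norm_neg, norm_smul, mul_pow, Real.norm_eq_abs, sq_abs]
  have h3 : ⟪G u, w - u⟫ = ⟪G u, v - u⟫ - t * ⟪G u, g⟫ := by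
    rw [hwu, inner_sub_right, real_inner_smul_right]
  rw [h1, h2] at hdes
  rw [h3] at hmin
  have hgg : ⟪G v, g⟫ - ⟪G u, g⟫ = ‖g‖ ^ 2 := by
    rw [hg, ← inner_sub_left, real_inner_self_eq_norm_sq]
  have hgg' : t * ⟪G v, g⟫ - t * ⟪G u, g⟫ = t * ‖g‖ ^ 2 := by
    rw [← mul_sub, hgg]
  have hLt2 : L / 2 * (t ^ 2 * ‖g‖ ^ 2) = t / 2 * ‖g‖ ^ 2 := by
    have : L * t ^ 2 = t := by rw [pow_two, ← mul_assoc, hLt, one_mul]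
    nlinarith [this]
  have h4 : ⟪G u, u - v⟫ = -⟪G u, v - u⟫ := by
    rw [show u - v = -(v - u) by abel, inner_neg_right]
  rw [h4]
  linarith

lemma aux_coco (φ : F → ℝ) (G : F → F)
    (hG : ∀ y : F, HasFDerivAt φ ((innerSL ℝ (G y)) : F →L[ℝ] ℝ) y)
    (hconv : ConvexOn ℝ Set.univ φ) (L : ℝ) (hL : 0 < L)
    (hLip : ∀ y₁ y₂ : F, ‖G y₁ - G y₂‖ ≤ L * ‖y₁ - y₂‖) (x y : F) :
    ‖G x - G y‖ ^ 2 ≤ L * ⟪G x - G y, x - y⟫ := by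
  have hLt : L * (1 / L) = 1 := by field_simp
  have h1 := aux_half φ G hG hconv L (1 / L) hLt hLip x y
  have h2 := aux_half φ G hG hconv L (1 / L) hLt hLip y x
  have hnr : ‖G x - G y‖ = ‖G y - G x‖ := norm_sub_rev _ _
  have e2 : ⟪G x, x - y⟫ + ⟪G y, y - x⟫ = ⟪G x - G y, x - y⟫ := by
    simp [inner_sub_left, inner_sub_right]; ring
  have hsum : (1 / L) * ‖G x - G y‖ ^ 2 ≤ ⟪G x - G y, x - y⟫ := by
    rw [hnr] at h2 ⊢
    nlinarith [h1, h2, e2, hnr]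
  nlinarith [mul_le_mul_of_nonneg_left hsum hL.le, hLt]

end GradHelpers


/-- one-step contraction of the gradient step of a strongly convex
function with Lipschitz gradient, on a real inner product space. -/
theorem gradient_step_contraction
    {E : Type*} [NormedAddCommGroup E] [InnerProductSpace ℝ E]
    (φ : E → ℝ) (G : E → E)
    (hG : ∀ y : E, HasFDerivAt φ ((innerSL ℝ (G y)) : E →L[ℝ] ℝ) y)
    (μ L : ℝ) (hμ : 0 < μ)
    (hsc : ConvexOn ℝ Set.univ (fun y : E => φ y - μ / 2 * ‖y‖ ^ 2))
    (hLip : ∀ y₁ y₂ : E, ‖G y₁ - G y₂‖ ≤ L * ‖y₁ - y₂‖) :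
    ∀ β : ℝ, 0 < β → β ≤ 1 / L →
      ∀ y₁ y₂ : E,
        ‖(y₁ - β • G y₁) - (y₂ - β • G y₂)‖ ^ 2 ≤ (1 - β * μ) * ‖y₁ - y₂‖ ^ 2 := by
  intro β hβ hβL y₁ y₂
  have hL : 0 < L := by
    by_contra hcon
    push_neg at hcon
    have h10 : (1:ℝ)/L ≤ 0 := by
      rcases hcon.lt_or_eq with h | h
      · exact (div_neg_of_pos_of_neg one_pos h).le
      · rw [h, div_zero]
    linarith
  have key1 := aux_strong_mono φ G hG μ hsc y₁ y₂
  have hconvφ : ConvexOn ℝ Set.univ φ :=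
    aux_convexOn_of_monotone φ G hG
      (fun x y => le_trans (by positivity) (aux_strong_mono φ G hG μ hsc x y))
  have key2 := aux_coco φ G hG hconvφ L hL hLip y₁ y₂
  have hre : (y₁ - β • G y₁) - (y₂ - β • G y₂) = (y₁ - y₂) - β • (G y₁ - G y₂) := by
    module
  rw [hre]
  have hexp : ‖(y₁ - y₂) - β • (G y₁ - G y₂)‖ ^ 2
      = ‖y₁ - y₂‖ ^ 2 - 2 * (β * ⟪G y₁ - G y₂, y₁ - y₂⟫) + β ^ 2 * ‖G y₁ - G y₂‖ ^ 2 := by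
    rw [norm_sub_sq_real, real_inner_smul_right, norm_smul, mul_pow, Real.norm_eq_abs,
      sq_abs, real_inner_comm]
  rw [hexp]
  have hβL' : β * L ≤ 1 := (le_div_iff₀ hL).mp hβL
  have hip : 0 ≤ ⟪G y₁ - G y₂, y₁ - y₂⟫ := le_trans (by positivity) key1
  nlinarith [mul_le_mul_of_nonneg_left key1 hβ.le,
    mul_le_mul_of_nonneg_left key2 (sq_nonneg β),
    mul_nonneg (mul_nonneg (by linarith : (0:ℝ) ≤ 1 - β * L) hip) hβ.le]
end
end
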